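/- arXiv:1709.03154 — 4 statements merged into one kernel-verified Lean document; each statement's English description precedes it below -/
import Mathlib

section
/- If f is an upper semi-continuous log-concave probability density on ℝ^d, then there exist α > 0 and β ∈ ℝ such that f(x) ≤ exp(−α‖x‖ + β) for all x ∈ ℝ^d. -/
open MeasureTheory Filter Set
open scoped ENNReal Topology

noncomputable section

/-- `ℝ^d` with its Euclidean norm and Lebesgue measure. -/
abbrev Rd (d : ℕ) : Type := EuclideanSpace ℝ (Fin d)

/-- A nonnegative function is log-concave (`log f` is concave, with `log 0 := -∞`),
expressed multiplicatively via `f x ^ (1-t) * f y ^ t ≤ f ((1-t) • x + t • y)`. -/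
def IsLogConcaveFn {E : Type*} [AddCommGroup E] [Module ℝ E] (f : E → ℝ) : Prop :=
  (∀ x, 0 ≤ f x) ∧
  ∀ x y : E, ∀ t : ℝ, t ∈ Set.Icc (0:ℝ) 1 →
    f x ^ (1 - t) * f y ^ t ≤ f ((1 - t) • x + t • y)

/-- A probability density with respect to the (Lebesgue) measure of a `MeasureSpace`. -/
def IsDensity {E : Type*} [MeasureSpace E] (f : E → ℝ) : Prop :=
  (∀ x, 0 ≤ f x) ∧ Measurable f ∧ ∫⁻ x, ENNReal.ofReal (f x) = 1

/-- Membership in the class `F_d`: an upper semi-continuous log-concave probability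
density. -/
def IsLCDensity {E : Type*} [MeasureSpace E] [TopologicalSpace E] [AddCommGroup E]
    [Module ℝ E] (f : E → ℝ) : Prop :=
  IsDensity f ∧ UpperSemicontinuous f ∧ IsLogConcaveFn f

/-- Membership in the class `P_d`: probability measures with finite first moment that are
not concentrated on any affine hyperplane `{x | l x = c}` (`l` a nonzero linear
functional). -/
def MemP {E : Type*} [NormedAddCommGroup E] [NormedSpace ℝ E] [MeasureSpace E]
    (P : Measure E) : Prop :=
  IsProbabilityMeasure P ∧ Integrable (fun x => ‖x‖) P ∧
  ∀ (l : E →ₗ[ℝ] ℝ) (c : ℝ), l ≠ 0 → P {x | l x = c} < 1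

/-- The log-concave projection predicate: `fs ∈ F_d` maximises `∫ log f dP` over `F_d`
(candidates whose objective is `-∞`, i.e. that vanish on a set of positive `P`-measure or
have non-integrable logarithm, are trivially dominated). -/
def IsLCProj {E : Type*} [NormedAddCommGroup E] [NormedSpace ℝ E] [MeasureSpace E]
    (P : Measure E) (fs : E → ℝ) : Prop :=
  IsLCDensity fs ∧ (∀ᵐ x ∂P, 0 < fs x) ∧ Integrable (fun x => Real.log (fs x)) P ∧
  ∀ g : E → ℝ, IsLCDensity g → (∀ᵐ x ∂P, 0 < g x) →
    Integrable (fun x => Real.log (g x)) P →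
    ∫ x, Real.log (g x) ∂P ≤ ∫ x, Real.log (fs x) ∂P

/-- `log y` with values in `[-∞, ∞)`, with the convention `log 0 := -∞`. -/
def elog (y : ℝ) : EReal := if y ≤ 0 then ⊥ else ((Real.log y : ℝ) : EReal)

/-- Positive part of an extended real number, as an `ℝ≥0∞`. -/
def epos (a : EReal) : ℝ≥0∞ := if a = ⊤ then ⊤ else ENNReal.ofReal a.toReal

/-- `e^a` for an extended real `a`, valued in `[0,∞]`. -/
def expE (a : EReal) : ℝ≥0∞ :=
  if a = ⊥ then 0 else if a = ⊤ then ⊤ else ENNReal.ofReal (Real.exp a.toReal)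

/-- Integral of an `EReal`-valued function: positive part minus negative part. -/
def erealIntegral {α : Type*} [MeasurableSpace α] (P : Measure α) (φ : α → EReal) : EReal :=
  ((∫⁻ x, epos (φ x) ∂P : ℝ≥0∞) : EReal) - ((∫⁻ x, epos (-(φ x)) ∂P : ℝ≥0∞) : EReal)

/-- The class `Φ`: upper semi-continuous, concave functions `φ : E → [-∞, ∞)` with
`φ(x) → -∞` as `‖x‖ → ∞`. -/
def MemPhi {E : Type*} [NormedAddCommGroup E] [NormedSpace ℝ E] (φ : E → EReal) : Prop :=
  (∀ x, φ x ≠ ⊤) ∧ UpperSemicontinuous φ ∧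
  (∀ x y : E, ∀ t : ℝ, t ∈ Set.Icc (0:ℝ) 1 →
    (((1 - t : ℝ)) : EReal) * φ x + ((t : ℝ) : EReal) * φ y ≤ φ ((1 - t) • x + t • y)) ∧
  Tendsto φ (Filter.comap (fun x => ‖x‖) Filter.atTop) (nhds ⊥)

/-- The functional `L(φ, P) = ∫ φ dP - ∫ e^φ dx`. -/
def Lfun {E : Type*} [NormedAddCommGroup E] [NormedSpace ℝ E] [MeasureSpace E]
    (φ : E → EReal) (P : Measure E) : EReal :=
  erealIntegral P φ - ((∫⁻ x, expE (φ x) : ℝ≥0∞) : EReal)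

/-- `L*(P) = sup_{φ ∈ Φ} L(φ, P)`. -/
def Lstar {E : Type*} [NormedAddCommGroup E] [NormedSpace ℝ E] [MeasureSpace E]
    (P : Measure E) : EReal :=
  ⨆ (φ : E → EReal) (_ : MemPhi φ), Lfun φ P

/-- Action of a matrix on a Euclidean vector. -/
def mulVE {m d : ℕ} (A : Matrix (Fin m) (Fin d) ℝ) (x : Rd d) : Rd m :=
  (WithLp.equiv 2 (Fin m → ℝ)).symm (A.mulVec ((WithLp.equiv 2 (Fin d → ℝ)) x))

section AuxExpDecay

open Metric

private theorem aux_markov {d : ℕ} {f : Rd d → ℝ} (hmeas : Measurable f)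
    (hint : ∫⁻ x, ENNReal.ofReal (f x) = 1) (t : ℝ) :
    ENNReal.ofReal t * volume {x : Rd d | t ≤ f x} ≤ 1 := by
  have h1 : volume {x : Rd d | t ≤ f x}
      ≤ volume {x : Rd d | ENNReal.ofReal t ≤ ENNReal.ofReal (f x)} := by
    apply measure_mono
    intro x hx
    exact ENNReal.ofReal_le_ofReal hx
  calc ENNReal.ofReal t * volume {x : Rd d | t ≤ f x}
      ≤ ENNReal.ofReal t * volume {x : Rd d | ENNReal.ofReal t ≤ ENNReal.ofReal (f x)} := by
        exact mul_le_mul_right h1 _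
    _ ≤ ∫⁻ x, ENNReal.ofReal (f x) :=
        mul_meas_ge_le_lintegral₀ (ENNReal.measurable_ofReal.comp hmeas).aemeasurable _
    _ = 1 := hint

private theorem aux_level {d : ℕ} {f : Rd d → ℝ} (hmeas : Measurable f)
    (hint : ∫⁻ x, ENNReal.ofReal (f x) = 1) :
    ∃ t : ℝ, 0 < t ∧ 0 < volume {x : Rd d | t ≤ f x} := by
  by_contra h
  push_neg at h
  have hz : ∀ n : ℕ, volume {x : Rd d | (1 : ℝ)/(n+1) ≤ f x} = 0 := by
    intro n
    have := h (1/(n+1)) (by positivity)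
    exact le_antisymm this (by positivity)
  have hU : volume {x : Rd d | 0 < f x} = 0 := by
    have hsub : {x : Rd d | 0 < f x} ⊆ ⋃ n : ℕ, {x : Rd d | (1:ℝ)/(n+1) ≤ f x} := by
      intro x hx
      have hx' : (0:ℝ) < f x := hx
      obtain ⟨n, hn⟩ := exists_nat_one_div_lt hx'
      exact Set.mem_iUnion.2 ⟨n, hn.le⟩
    exact measure_mono_null hsub (measure_iUnion_null hz)
  have : ∫⁻ x, ENNReal.ofReal (f x) = 0 := by
    rw [lintegral_eq_zero_iff (f := fun x => ENNReal.ofReal (f x)) (hmeas.ennreal_ofReal)]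
    filter_upwards [measure_eq_zero_iff_ae_notMem.1 hU] with x hx
    simp only [Set.mem_setOf_eq, not_lt] at hx
    simp [ENNReal.ofReal_eq_zero.2 hx]
  rw [hint] at this
  exact one_ne_zero this

private theorem aux_convex {d : ℕ} {f : Rd d → ℝ} (hlc : IsLogConcaveFn f) {t : ℝ}
    (ht : 0 < t) : Convex ℝ {x : Rd d | t ≤ f x} := by
  intro x hx y hy a b ha hb hab
  have hb1 : b ≤ 1 := by linarith
  have h1a : 1 - b = a := by linarith
  have this' := hlc.2 x y b ⟨hb, hb1⟩
  rw [h1a] at this'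
  have hx' : t ≤ f x := hx
  have hy' : t ≤ f y := hy
  have h2 : t ^ a * t ^ b ≤ f x ^ a * f y ^ b :=
    mul_le_mul (Real.rpow_le_rpow ht.le hx' ha) (Real.rpow_le_rpow ht.le hy' hb)
      (Real.rpow_nonneg ht.le b) (Real.rpow_nonneg (ht.le.trans hx') a)
  have h3 : t ^ a * t ^ b = t := by
    rw [← Real.rpow_add ht, hab, Real.rpow_one]
  show t ≤ f (a • x + b • y)
  calc t = t ^ a * t ^ b := h3.symm
    _ ≤ f x ^ a * f y ^ b := h2
    _ ≤ f (a • x + b • y) := this'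

private theorem aux_interior {d : ℕ} {s : Set (Rd d)} (hconv : Convex ℝ s)
    (hcl : IsClosed s) (hpos : 0 < volume s) :
    ∃ x0 : Rd d, ∃ r : ℝ, 0 < r ∧ ball x0 r ⊆ s := by
  have hfr := hconv.addHaar_frontier (volume : Measure (Rd d))
  by_cases hi : (interior s).Nonempty
  · obtain ⟨x0, hx0⟩ := hi
    obtain ⟨r, hr, hball⟩ := Metric.isOpen_iff.1 isOpen_interior x0 hx0
    exact ⟨x0, r, hr, hball.trans interior_subset⟩
  · exfalso
    rw [Set.not_nonempty_iff_eq_empty] at hi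
    have : frontier s = s := by
      rw [frontier, hi, hcl.closure_eq]
      simp
    rw [this] at hfr
    exact hpos.ne' hfr

private theorem aux_cone_ball {d : ℕ} {K : Set (Rd d)} (hconv : Convex ℝ K) {x0 : Rd d}
    {r : ℝ} (hball : ball x0 r ⊆ K) {y : Rd d} (hy : y ∈ K) {s : ℝ} (hs0 : 0 ≤ s)
    (hs : s ≤ 1/2) : ball (x0 + s • (y - x0)) (r/2) ⊆ K := by
  intro p hp
  set c := x0 + s • (y - x0) with hc
  have h1s : (1:ℝ)/2 ≤ 1 - s := by linarith
  have h1s' : (0:ℝ) < 1 - s := by linarith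
  set q := x0 + (1 - s)⁻¹ • (p - c) with hq
  have hqmem : q ∈ ball x0 r := by
    rw [mem_ball, dist_eq_norm] at hp ⊢
    have : q - x0 = (1 - s)⁻¹ • (p - c) := by rw [hq]; abel
    rw [this, norm_smul]
    have hinv : |(1 - s)⁻¹| ≤ 2 := by
      rw [abs_of_pos (inv_pos.2 h1s')]
      rw [inv_le_comm₀ h1s' (by norm_num)]
      linarith
    have hrpos : 0 < r := by
      by_contra hr
      push_neg at hr
      have : ‖p - c‖ < 0 := lt_of_lt_of_le hp (by linarith)
      exact absurd this (not_lt.2 (norm_nonneg _))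
    calc |(1 - s)⁻¹| * ‖p - c‖ ≤ 2 * ‖p - c‖ := by
          exact mul_le_mul_of_nonneg_right hinv (norm_nonneg _)
      _ < 2 * (r/2) := by
          exact mul_lt_mul_of_pos_left hp (by norm_num)
      _ = r := by ring
  have hqK : q ∈ K := hball hqmem
  have hrepr : p = (1 - s) • q + s • y := by
    rw [hq, hc]
    rw [smul_add, smul_smul]
    rw [mul_inv_cancel₀ h1s'.ne']
    module
  rw [hrepr]
  exact hconv hqK hy h1s'.le hs0 (by ring)

private theorem aux_bounded_level {d : ℕ} {K : Set (Rd d)} (hconv : Convex ℝ K)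
    {x0 : Rd d} {r : ℝ} (hr : 0 < r) (hball : ball x0 r ⊆ K)
    (hvol : volume K ≠ ⊤) : ∃ R : ℝ, 0 < R ∧ ∀ y ∈ K, ‖y - x0‖ < R := by
  set v := volume (ball (0 : Rd d) (r/2)) with hv
  have hvpos : 0 < v := measure_ball_pos _ _ (by linarith)
  have hvne : v ≠ ⊤ := measure_ball_lt_top.ne
  have hdivne : volume K / v ≠ ⊤ := (ENNReal.div_lt_top hvol hvpos.ne').ne
  obtain ⟨N, hN⟩ := ENNReal.exists_nat_gt hdivne
  refine ⟨2 * r * (N + 1), by positivity, ?_⟩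
  intro y hy
  by_contra hyfar
  push_neg at hyfar
  set D := ‖y - x0‖ with hD
  have hDpos : 0 < D := lt_of_lt_of_le (by positivity) hyfar
  set c : ℕ → Rd d := fun k => x0 + ((k * r) / D) • (y - x0) with hcdef
  have hsub : ∀ k ∈ Finset.range (N + 1), ball (c k) (r/2) ⊆ K := by
    intro k hk
    apply aux_cone_ball hconv hball hy (by positivity)
    rw [Finset.mem_range] at hk
    have hk' : (k : ℝ) ≤ N := by exact_mod_cast Nat.lt_succ_iff.1 hk
    rw [div_le_div_iff₀ hDpos (by norm_num)]
    calc (k : ℝ) * r * 2 ≤ (N : ℝ) * r * 2 := by nlinarith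
      _ ≤ 2 * r * ((N:ℝ) + 1) := by nlinarith
      _ ≤ D := hyfar
      _ = 1 * D := (one_mul D).symm
  have hdisj : Set.PairwiseDisjoint (↑(Finset.range (N+1)) : Set ℕ)
      (fun k => ball (c k) (r/2)) := by
    intro j _ k _ hjk
    apply ball_disjoint_ball
    rw [dist_eq_norm]
    have hck : c j - c k = (((j:ℝ) * r)/D - ((k:ℝ) * r)/D) • (y - x0) := by
      rw [hcdef]
      simp only [sub_smul]
      abel
    rw [hck, norm_smul, Real.norm_eq_abs]
    have : ((j:ℝ) * r)/D - ((k:ℝ) * r)/D = ((j:ℝ) - k) * r / D := by ring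
    rw [this, abs_div, abs_mul, abs_of_pos hDpos, div_mul_eq_mul_div,
      abs_of_pos hr]
    have hjk1 : (1:ℝ) ≤ |(j:ℝ) - k| := by
      have h1 : (1:ℤ) ≤ |(j:ℤ) - k| := Int.one_le_abs (sub_ne_zero.2 (by exact_mod_cast hjk))
      calc (1:ℝ) = ((1:ℤ):ℝ) := by norm_num
        _ ≤ ((|(j:ℤ) - k| : ℤ) : ℝ) := by exact_mod_cast h1
        _ = |(j:ℝ) - k| := by push_cast; rfl
    calc r/2 + r/2 = 1 * r := by ring
      _ ≤ |(j:ℝ) - k| * r := mul_le_mul_of_nonneg_right hjk1 hr.le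
      _ = |(j:ℝ) - k| * r * D / D := by field_simp
      _ ≤ |(j:ℝ) - k| * r * D / D := le_refl _
  have hsum : ((N:ℝ≥0∞) + 1) * v ≤ volume K := by
    have hunion : (⋃ k ∈ Finset.range (N+1), ball (c k) (r/2)) ⊆ K := by
      simp only [Set.iUnion_subset_iff]
      intro k hk
      exact hsub k hk
    calc ((N:ℝ≥0∞) + 1) * v = ∑ _k ∈ Finset.range (N+1), v := by
          rw [Finset.sum_const, Finset.card_range, nsmul_eq_mul]
          push_cast
          ring
      _ = ∑ k ∈ Finset.range (N+1), volume (ball (c k) (r/2)) :=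
          Finset.sum_congr rfl (fun k _ => (Measure.addHaar_ball_center _ _ _).symm)
      _ = volume (⋃ k ∈ Finset.range (N+1), ball (c k) (r/2)) :=
          (measure_biUnion_finset hdisj (fun k _ => measurableSet_ball)).symm
      _ ≤ volume K := measure_mono hunion
  have : ((N:ℝ≥0∞) + 1) ≤ volume K / v :=
    (ENNReal.le_div_iff_mul_le (Or.inl hvpos.ne') (Or.inl hvne)).2 hsum
  exact absurd hN (not_lt.2 (le_trans le_self_add this))

private theorem aux_sup_bound {d : ℕ} (f : Rd d → ℝ) (hnn : ∀ x, 0 ≤ f x)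
    (hmarkov : ∀ u : ℝ, ENNReal.ofReal u * volume {x : Rd d | u ≤ f x} ≤ 1)
    (hlc2 : ∀ x y : Rd d, ∀ t : ℝ, t ∈ Set.Icc (0:ℝ) 1 →
      f x ^ (1 - t) * f y ^ t ≤ f ((1 - t) • x + t • y))
    {x0 : Rd d} {r t0 : ℝ} (hr : 0 < r) (ht0 : 0 < t0)
    (hball : ∀ b ∈ ball x0 r, t0 ≤ f b) :
    ∃ M : ℝ, 0 < M ∧ ∀ y, f y ≤ M := by
  set v2 := volume (ball (0 : Rd d) (r/2)) with hv2
  have hv2pos : 0 < v2 := measure_ball_pos _ _ (by linarith)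
  have hinvne : v2⁻¹ ≠ ⊤ := by
    simp [ENNReal.inv_ne_top, hv2pos.ne']
  set c := (v2⁻¹).toReal with hc
  have hcnn : 0 ≤ c := ENNReal.toReal_nonneg
  have key : ∀ y : Rd d, t0 ^ ((1:ℝ)/2) * f y ^ ((1:ℝ)/2) ≤ c := by
    intro y
    set u := t0 ^ ((1:ℝ)/2) * f y ^ ((1:ℝ)/2) with hu
    have hsubset : ball ((1/2 : ℝ) • (x0 + y)) (r/2) ⊆ {x : Rd d | u ≤ f x} := by
      intro p hp
      set b := (2:ℝ) • p - y with hb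
      have hbmem : b ∈ ball x0 r := by
        rw [mem_ball, dist_eq_norm] at hp ⊢
        have hbe : b - x0 = (2:ℝ) • (p - (1/2 : ℝ) • (x0 + y)) := by
          rw [hb]; module
        rw [hbe, norm_smul]
        simp only [Real.norm_ofNat]
        linarith
      have hprep : p = (1 - (1/2:ℝ)) • b + (1/2:ℝ) • y := by
        rw [hb]; module
      have h1 := hlc2 b y (1/2) ⟨by norm_num, by norm_num⟩
      rw [← hprep] at h1
      have h2 : u ≤ f b ^ (1 - (1/2:ℝ)) * f y ^ ((1:ℝ)/2) := by
        rw [hu]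
        have : (1 : ℝ) - 1/2 = 1/2 := by norm_num
        rw [this]
        exact mul_le_mul_of_nonneg_right
          (Real.rpow_le_rpow ht0.le (hball b hbmem) (by norm_num))
          (Real.rpow_nonneg (hnn y) _)
      exact le_trans h2 h1
    have hvol : v2 ≤ volume {x : Rd d | u ≤ f x} := by
      calc v2 = volume (ball ((1/2 : ℝ) • (x0 + y)) (r/2)) :=
            (Measure.addHaar_ball_center _ _ _).symm
        _ ≤ volume {x : Rd d | u ≤ f x} := measure_mono hsubset
    have h3 : ENNReal.ofReal u * v2 ≤ 1 :=
      le_trans (mul_le_mul_right hvol _) (hmarkov u)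
    have h4 : ENNReal.ofReal u ≤ v2⁻¹ := by
      rw [← ENNReal.le_div_iff_mul_le (Or.inl hv2pos.ne') (Or.inl measure_ball_lt_top.ne)] at h3
      simpa [ENNReal.div_eq_inv_mul, one_mul] using h3
    exact (ENNReal.ofReal_le_iff_le_toReal hinvne).1 h4
  set c2 := c / t0 ^ ((1:ℝ)/2) with hc2
  have hc2nn : 0 ≤ c2 := div_nonneg hcnn (Real.rpow_nonneg ht0.le _)
  refine ⟨c2^2 + 1, by positivity, ?_⟩
  intro y
  have h5 : f y ^ ((1:ℝ)/2) ≤ c2 := by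
    rw [hc2, le_div_iff₀ (Real.rpow_pos_of_pos ht0 _)]
    calc f y ^ ((1:ℝ)/2) * t0 ^ ((1:ℝ)/2) = t0 ^ ((1:ℝ)/2) * f y ^ ((1:ℝ)/2) := by ring
      _ ≤ c := key y
  have h6 : f y = (f y ^ ((1:ℝ)/2))^(2:ℕ) := by
    rw [← Real.rpow_natCast (f y ^ ((1:ℝ)/2)) 2, ← Real.rpow_mul (hnn y)]
    norm_num
  calc f y = (f y ^ ((1:ℝ)/2))^(2:ℕ) := h6
    _ ≤ c2^2 := by
        apply pow_le_pow_left₀ (Real.rpow_nonneg (hnn y) _) h5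
    _ ≤ c2^2 + 1 := by linarith

private theorem aux_far_decay {d : ℕ} {f : Rd d → ℝ} (hnn : ∀ x, 0 ≤ f x)
    (hlc2 : ∀ x y : Rd d, ∀ t : ℝ, t ∈ Set.Icc (0:ℝ) 1 →
      f x ^ (1 - t) * f y ^ t ≤ f ((1 - t) • x + t • y))
    {x0 : Rd d} {t0 R : ℝ} (ht0 : 0 < t0) (hR : 0 < R) (hx0 : t0 ≤ f x0)
    (hfar : ∀ z : Rd d, ‖z - x0‖ = R → f z < t0/2)
    {x : Rd d} (hx : R < ‖x - x0‖) :
    f x ≤ t0 * Real.exp (-(Real.log 2 / R) * ‖x - x0‖) := by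
  set D := ‖x - x0‖ with hD
  have hDpos : 0 < D := hR.trans hx
  set l := R / D with hl
  have hl0 : 0 < l := div_pos hR hDpos
  have hl1 : l < 1 := (div_lt_one hDpos).2 hx
  set z := x0 + l • (x - x0) with hz
  have hzn : ‖z - x0‖ = R := by
    have : z - x0 = l • (x - x0) := by rw [hz]; abel
    rw [this, norm_smul, Real.norm_eq_abs, abs_of_pos hl0, ← hD, hl]
    field_simp
  have hzlt : f z < t0/2 := hfar z hzn
  have hzr : z = (1 - l) • x0 + l • x := by rw [hz]; module
  have h1 : f x0 ^ (1 - l) * f x ^ l ≤ f z := by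
    rw [hzr]; exact hlc2 x0 x l ⟨hl0.le, hl1.le⟩
  rcases eq_or_lt_of_le (hnn x) with hfx0 | hfxpos
  · rw [← hfx0]; positivity
  have h2 : t0 ^ (1 - l) * f x ^ l < t0 / 2 := by
    calc t0 ^ (1 - l) * f x ^ l ≤ f x0 ^ (1 - l) * f x ^ l :=
          mul_le_mul_of_nonneg_right (Real.rpow_le_rpow ht0.le hx0 (by linarith))
            (Real.rpow_nonneg (hnn x) _)
      _ ≤ f z := h1
      _ < t0 / 2 := hzlt
  have ht0l : (0:ℝ) < t0 ^ (1 - l) := Real.rpow_pos_of_pos ht0 _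
  have h3 : f x ^ l < t0 ^ l / 2 := by
    have hlt := (lt_div_iff₀' ht0l).2 h2
    calc f x ^ l < t0 / 2 / t0 ^ (1 - l) := hlt
      _ = t0 ^ (1:ℝ) / t0 ^ (1 - l) / 2 := by rw [Real.rpow_one]; ring
      _ = t0 ^ l / 2 := by rw [← Real.rpow_sub ht0]; norm_num
  have h4 : f x < (t0 ^ l / 2) ^ l⁻¹ := by
    have hstep : (f x ^ l) ^ l⁻¹ < (t0 ^ l / 2) ^ l⁻¹ :=
      Real.rpow_lt_rpow (Real.rpow_nonneg (hnn x) _) h3 (inv_pos.2 hl0)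
    rwa [← Real.rpow_mul (hnn x), mul_inv_cancel₀ hl0.ne', Real.rpow_one] at hstep
  have h5 : (t0 ^ l / 2) ^ l⁻¹ = t0 * Real.exp (-(Real.log 2 / R) * D) := by
    rw [Real.div_rpow (Real.rpow_nonneg ht0.le _) (by norm_num : (0:ℝ) ≤ 2)]
    rw [← Real.rpow_mul ht0.le, mul_inv_cancel₀ hl0.ne', Real.rpow_one]
    rw [Real.rpow_def_of_pos (by norm_num : (0:ℝ) < 2)]
    rw [div_eq_mul_inv, ← Real.exp_neg]
    congr 1
    rw [hl]
    field_simp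
  exact le_of_lt (h5 ▸ h4)

end AuxExpDecay


/-- Every upper semi-continuous log-concave density on `ℝ^d` has an exponentially
decaying upper bound. -/
theorem statement1 (d : ℕ) (f : Rd d → ℝ) (hf : IsLCDensity f) :
    ∃ α : ℝ, 0 < α ∧ ∃ β : ℝ, ∀ x : Rd d, f x ≤ Real.exp (-α * ‖x‖ + β) := by
  obtain ⟨⟨hnn, hmeas, hint⟩, husc, hlc⟩ := hf
  have hlc2 := hlc.2
  have hmarkov : ∀ u : ℝ, ENNReal.ofReal u * volume {x : Rd d | u ≤ f x} ≤ 1 :=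
    fun u => aux_markov hmeas hint u
  obtain ⟨t0, ht0, hpos⟩ := aux_level hmeas hint
  have hconv0 : Convex ℝ {x : Rd d | t0 ≤ f x} := aux_convex hlc ht0
  have hcl0 : IsClosed {x : Rd d | t0 ≤ f x} := husc.isClosed_preimage t0
  obtain ⟨x0, r, hr, hball⟩ := aux_interior hconv0 hcl0 hpos
  have hconv1 : Convex ℝ {x : Rd d | t0/2 ≤ f x} := aux_convex hlc (by linarith)
  have hball1 : Metric.ball x0 r ⊆ {x : Rd d | t0/2 ≤ f x} := by
    intro b hb
    have : t0 ≤ f b := hball hb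
    show t0/2 ≤ f b
    linarith
  have hvol1 : volume {x : Rd d | t0/2 ≤ f x} ≠ ⊤ := by
    intro htop
    have hm := hmarkov (t0/2)
    rw [htop, ENNReal.mul_top (by simp [ENNReal.ofReal_eq_zero]; linarith)] at hm
    exact absurd hm (by simp)
  obtain ⟨R, hRpos, hRlt⟩ := aux_bounded_level hconv1 hr hball1 hvol1
  have hx0f : t0 ≤ f x0 := hball (Metric.mem_ball_self hr)
  have hfarlt : ∀ z : Rd d, ‖z - x0‖ = R → f z < t0/2 := by
    intro z hzR
    by_contra h
    push_neg at h
    have := hRlt z h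
    rw [hzR] at this
    exact lt_irrefl R this
  obtain ⟨M, hM, hbd⟩ := aux_sup_bound f hnn hmarkov hlc2 hr ht0 (fun b hb => hball hb)
  set α := Real.log 2 / R with hα_def
  have hα : 0 < α := div_pos (Real.log_pos one_lt_two) hRpos
  refine ⟨α, hα, max (Real.log M + α * (‖x0‖ + R)) (Real.log t0 + α * ‖x0‖), ?_⟩
  intro x
  set β := max (Real.log M + α * (‖x0‖ + R)) (Real.log t0 + α * ‖x0‖) with hβ
  have hxn : ‖x‖ ≤ ‖x - x0‖ + ‖x0‖ := by
    calc ‖x‖ = ‖(x - x0) + x0‖ := by rw [sub_add_cancel]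
      _ ≤ ‖x - x0‖ + ‖x0‖ := norm_add_le _ _
  by_cases hcase : ‖x - x0‖ ≤ R
  · have hb1 : Real.log M + α * (‖x0‖ + R) ≤ β := le_max_left _ _
    have hxn2 : ‖x‖ ≤ R + ‖x0‖ := by linarith
    have hmul : α * ‖x‖ ≤ α * (R + ‖x0‖) := mul_le_mul_of_nonneg_left hxn2 hα.le
    have heq : α * (R + ‖x0‖) = α * (‖x0‖ + R) := by ring
    calc f x ≤ M := hbd x
      _ = Real.exp (Real.log M) := (Real.exp_log hM).symm
      _ ≤ Real.exp (-α * ‖x‖ + β) := by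
          apply Real.exp_le_exp.2
          rw [heq] at hmul
          linarith
  · push_neg at hcase
    have hfd := aux_far_decay hnn hlc2 ht0 hRpos hx0f hfarlt hcase
    have hb2 : Real.log t0 + α * ‖x0‖ ≤ β := le_max_right _ _
    have hmul : α * ‖x‖ ≤ α * (‖x - x0‖ + ‖x0‖) := mul_le_mul_of_nonneg_left hxn hα.le
    calc f x ≤ t0 * Real.exp (-(Real.log 2 / R) * ‖x - x0‖) := hfd
      _ = Real.exp (Real.log t0 + -α * ‖x - x0‖) := by
          rw [Real.exp_add, Real.exp_log ht0, hα_def]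
      _ ≤ Real.exp (-α * ‖x‖ + β) := by
          apply Real.exp_le_exp.2
          have hexp : α * (‖x - x0‖ + ‖x0‖) = α * ‖x - x0‖ + α * ‖x0‖ := by ring
          rw [hexp] at hmul
          linarith
end
end

section
/- Let d = d₁ + d₂ with d₁, d₂ ∈ ℕ, and let f : ℝ^d → [0, ∞) be a (measurable) log-concave function. Then the marginal function x ↦ ∫_{ℝ^{d₂}} f(x, y) dy is log-concave on ℝ^{d₁}. -/
open MeasureTheory Filter Set
open scoped ENNReal Topology

noncomputable section

section PLaux

open scoped NNReal Pointwise

/-- Weighted AM-GM for two extended nonnegative reals. -/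
lemma PL.engm (a b : ℝ≥0∞) {t : ℝ} (ht0 : 0 < t) (ht1 : t < 1) :
    a ^ (1 - t) * b ^ t ≤ ENNReal.ofReal (1 - t) * a + ENNReal.ofReal t * b := by
  have h1t : (0:ℝ) < 1 - t := by linarith
  rcases eq_or_ne a ⊤ with rfl | ha
  · have h : ENNReal.ofReal (1 - t) * ⊤ = ⊤ :=
      ENNReal.mul_top (by simpa using (ENNReal.ofReal_pos.2 h1t).ne')
    have h2 : ENNReal.ofReal (1 - t) * ⊤ + ENNReal.ofReal t * b = ⊤ := by rw [h]; simp
    rw [h2]; exact le_top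
  rcases eq_or_ne b ⊤ with rfl | hb
  · have h : ENNReal.ofReal t * ⊤ = ⊤ :=
      ENNReal.mul_top (by simpa using (ENNReal.ofReal_pos.2 ht0).ne')
    have h2 : ENNReal.ofReal (1 - t) * a + ENNReal.ofReal t * ⊤ = ⊤ := by rw [h]; simp
    rw [h2]; exact le_top
  lift a to ℝ≥0 using ha
  lift b to ℝ≥0 using hb
  have key := NNReal.geom_mean_le_arith_mean2_weighted (Real.toNNReal (1 - t))
    (Real.toNNReal t) a b (by
      rw [← Real.toNNReal_add h1t.le ht0.le]
      simp)
  have e1 : ((Real.toNNReal (1 - t) : ℝ)) = 1 - t := Real.coe_toNNReal _ h1t.le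
  have e2 : ((Real.toNNReal t : ℝ)) = t := Real.coe_toNNReal _ ht0.le
  rw [e1, e2] at key
  calc (a : ℝ≥0∞) ^ (1 - t) * (b : ℝ≥0∞) ^ t
      = ((a ^ (1 - t) * b ^ t : ℝ≥0) : ℝ≥0∞) := by
        rw [ENNReal.coe_mul, ENNReal.coe_rpow_of_nonneg _ h1t.le,
          ENNReal.coe_rpow_of_nonneg _ ht0.le]
    _ ≤ ((Real.toNNReal (1 - t) * a + Real.toNNReal t * b : ℝ≥0) : ℝ≥0∞) := by
        exact_mod_cast key
    _ = _ := by
        push_cast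
        rw [ENNReal.ofReal, ENNReal.ofReal]

/-- One-dimensional sumset inequality (baby Brunn–Minkowski). -/
lemma PL.sumset_vol {A B : Set ℝ} (hA : IsCompact A) (hB : IsCompact B)
    (hA0 : A.Nonempty) (hB0 : B.Nonempty) :
    volume A + volume B ≤ volume (A + B) := by
  set a := sSup A with ha'
  set b := sInf B with hb'
  have haA : a ∈ A := hA.sSup_mem hA0
  have hbB : b ∈ B := hB.sInf_mem hB0
  set S := (fun x => x + b) '' A with hS
  set T := (fun y => a + y) '' B with hT
  have h1 : S ∪ T ⊆ A + B := by
    rintro x (⟨u, hu, rfl⟩ | ⟨v, hv, rfl⟩)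
    · exact add_mem_add hu hbB
    · exact add_mem_add haA hv
  have h2 : S ∩ T ⊆ {a + b} := by
    rintro x ⟨⟨u, hu, rfl⟩, v, hv, hv'⟩
    have h3 : u ≤ a := le_csSup hA.bddAbove hu
    have h4 : b ≤ v := csInf_le hB.bddBelow hv
    have h5 : a + v = u + b := hv'
    have h6 : u + b = a + b := by linarith
    simpa using h6
  have hTm : MeasurableSet T :=
    ((hB.image (continuous_add_left a)).isClosed).measurableSet
  have key := measure_union_add_inter (μ := volume) S hTm
  have eS : volume S = volume A := by
    have : S = (fun x => x + -b) ⁻¹' A := by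
      rw [hS]; ext x
      simp only [mem_image, mem_preimage]
      constructor
      · rintro ⟨u, hu, rfl⟩; simpa using hu
      · intro hx; exact ⟨x + -b, hx, by ring⟩
    rw [this, measure_preimage_add_right]
  have eT : volume T = volume B := by
    have : T = (fun y => -a + y) ⁻¹' B := by
      rw [hT]; ext x
      simp only [mem_image, mem_preimage]
      constructor
      · rintro ⟨v, hv, rfl⟩; simpa using hv
      · intro hx; exact ⟨-a + x, hx, by ring⟩
    rw [this, measure_preimage_add]
  calc volume A + volume B = volume S + volume T := by rw [eS, eT]
    _ = volume (S ∪ T) + volume (S ∩ T) := key.symm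
    _ ≤ volume (A + B) + volume ({a + b} : Set ℝ) :=
        add_le_add (measure_mono h1) (measure_mono h2)
    _ = volume (A + B) := by simp

/-- Superlevel-set estimate. -/
lemma PL.level_bound {t : ℝ} (ht0 : 0 < t) (ht1 : t < 1) {A B C : Set ℝ}
    (hA : MeasurableSet A) (hAne : A.Nonempty) (hBne : B.Nonempty)
    (hB : MeasurableSet B)
    (hAfin : volume A ≠ ⊤) (hBfin : volume B ≠ ⊤)
    (hsub : ∀ x ∈ A, ∀ y ∈ B, (1 - t) * x + t * y ∈ C) :
    ENNReal.ofReal (1 - t) * volume A + ENNReal.ofReal t * volume B ≤ volume C := by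
  have h1t : (0:ℝ) < 1 - t := by linarith
  rcases eq_or_ne (volume C) ⊤ with hC | hC
  · rw [hC]; exact le_top
  refine ENNReal.le_of_forall_pos_le_add fun ε hε _ => ?_
  have hεne : (ε : ℝ≥0∞) ≠ 0 := by exact_mod_cast hε.ne'
  obtain ⟨K₁, hK₁A, hK₁c, hK₁⟩ := hA.exists_isCompact_lt_add hAfin hεne
  obtain ⟨K₂, hK₂B, hK₂c, hK₂⟩ := hB.exists_isCompact_lt_add hBfin hεne
  obtain ⟨x₀, hx₀⟩ := hAne
  obtain ⟨y₀, hy₀⟩ := hBne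
  set K₁' : Set ℝ := insert x₀ K₁ with hK₁'def
  set K₂' : Set ℝ := insert y₀ K₂ with hK₂'def
  have hK₁'c : IsCompact K₁' := hK₁c.insert x₀
  have hK₂'c : IsCompact K₂' := hK₂c.insert y₀
  have hK₁'A : K₁' ⊆ A := insert_subset hx₀ hK₁A
  have hK₂'B : K₂' ⊆ B := insert_subset hy₀ hK₂B
  have hK₁'m : volume A ≤ volume K₁' + ε :=
    le_trans hK₁.le (add_le_add_left (measure_mono (subset_insert _ _)) _)
  have hK₂'m : volume B ≤ volume K₂' + ε :=
    le_trans hK₂.le (add_le_add_left (measure_mono (subset_insert _ _)) _)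
  -- the scaled sumset
  have hsum : (1 - t) • K₁' + t • K₂' ⊆ C := by
    rintro z ⟨u, hu, v, hv, rfl⟩
    obtain ⟨p, hp, rfl⟩ := hu
    obtain ⟨q, hq, rfl⟩ := hv
    exact hsub p (hK₁'A hp) q (hK₂'B hq)
  have hvol1 : volume ((1 - t) • K₁') = ENNReal.ofReal (1 - t) * volume K₁' := by
    rw [Measure.addHaar_smul_of_nonneg volume h1t.le]
    simp
  have hvol2 : volume (t • K₂') = ENNReal.ofReal t * volume K₂' := by
    rw [Measure.addHaar_smul_of_nonneg volume ht0.le]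
    simp
  have main : ENNReal.ofReal (1 - t) * volume K₁' + ENNReal.ofReal t * volume K₂'
      ≤ volume C := by
    rw [← hvol1, ← hvol2]
    refine le_trans ?_ (measure_mono hsum)
    exact PL.sumset_vol (hK₁'c.smul _) (hK₂'c.smul _)
      ((insert_nonempty _ _).smul_set) ((insert_nonempty _ _).smul_set)
  have hcoef : ENNReal.ofReal (1 - t) + ENNReal.ofReal t = 1 := by
    rw [← ENNReal.ofReal_add h1t.le ht0.le]
    norm_num
  calc ENNReal.ofReal (1 - t) * volume A + ENNReal.ofReal t * volume B
      ≤ ENNReal.ofReal (1 - t) * (volume K₁' + ε) + ENNReal.ofReal t * (volume K₂' + ε) :=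
        add_le_add (mul_le_mul_right hK₁'m _) (mul_le_mul_right hK₂'m _)
    _ = (ENNReal.ofReal (1 - t) * volume K₁' + ENNReal.ofReal t * volume K₂')
        + (ENNReal.ofReal (1 - t) + ENNReal.ofReal t) * ε := by ring
    _ = (ENNReal.ofReal (1 - t) * volume K₁' + ENNReal.ofReal t * volume K₂') + ε := by
        rw [hcoef, one_mul]
    _ ≤ volume C + ε := add_le_add_left main _

/-- Normalized 1-D Prékopa–Leindler-type estimate. -/
lemma PL.dim1_norm {t : ℝ} (ht0 : 0 < t) (ht1 : t < 1) {f g h : ℝ → ℝ≥0∞}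
    (hf : Measurable f) (hg : Measurable g) (hh : Measurable h)
    (hfs : ⨆ x, f x = 1) (hgs : ⨆ x, g x = 1)
    (hfi : ∫⁻ x, f x ≠ ⊤) (hgi : ∫⁻ x, g x ≠ ⊤)
    (hyp : ∀ x y, f x ^ (1 - t) * g y ^ t ≤ h ((1 - t) * x + t * y)) :
    ENNReal.ofReal (1 - t) * (∫⁻ x, f x) + ENNReal.ofReal t * (∫⁻ x, g x) ≤ ∫⁻ x, h x := by
  have h1t : (0:ℝ) < 1 - t := by linarith
  have hfle : ∀ x, f x ≤ 1 := fun x => hfs ▸ le_iSup f x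
  have hgle : ∀ x, g x ≤ 1 := fun x => hgs ▸ le_iSup g x
  have hfne : ∀ x, f x ≠ ⊤ := fun x => ((hfle x).trans_lt ENNReal.one_lt_top).ne
  have hgne : ∀ x, g x ≠ ⊤ := fun x => ((hgle x).trans_lt ENNReal.one_lt_top).ne
  set h1 : ℝ → ℝ≥0∞ := fun z => min (h z) 1 with hh1def
  have hh1 : Measurable h1 := hh.min measurable_const
  have hh1le : ∀ z, h1 z ≤ 1 := fun z => min_le_right _ _
  have hh1ne : ∀ z, h1 z ≠ ⊤ := fun z => ((hh1le z).trans_lt ENNReal.one_lt_top).ne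
  -- real-valued versions
  set F : ℝ → ℝ := fun x => (f x).toReal with hFdef
  set G : ℝ → ℝ := fun x => (g x).toReal with hGdef
  set H : ℝ → ℝ := fun z => (h1 z).toReal with hHdef
  have hFm : Measurable F := hf.ennreal_toReal
  have hGm : Measurable G := hg.ennreal_toReal
  have hHm : Measurable H := hh1.ennreal_toReal
  -- layer cake representations
  have layF : ∫⁻ x, f x = ∫⁻ s in Ioi (0:ℝ), volume {x | s < F x} := by
    rw [show (fun x => f x) = fun x => ENNReal.ofReal (F x) from
      funext fun x => (ENNReal.ofReal_toReal (hfne x)).symm]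
    exact lintegral_eq_lintegral_meas_lt volume
      (Filter.Eventually.of_forall fun x => ENNReal.toReal_nonneg) hFm.aemeasurable
  have layG : ∫⁻ x, g x = ∫⁻ s in Ioi (0:ℝ), volume {x | s < G x} := by
    rw [show (fun x => g x) = fun x => ENNReal.ofReal (G x) from
      funext fun x => (ENNReal.ofReal_toReal (hgne x)).symm]
    exact lintegral_eq_lintegral_meas_lt volume
      (Filter.Eventually.of_forall fun x => ENNReal.toReal_nonneg) hGm.aemeasurable
  have layH : ∫⁻ z, h1 z = ∫⁻ s in Ioi (0:ℝ), volume {z | s < H z} := by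
    rw [show (fun z => h1 z) = fun z => ENNReal.ofReal (H z) from
      funext fun z => (ENNReal.ofReal_toReal (hh1ne z)).symm]
    exact lintegral_eq_lintegral_meas_lt volume
      (Filter.Eventually.of_forall fun z => ENNReal.toReal_nonneg) hHm.aemeasurable
  -- superlevel sets
  set νf : ℝ → ℝ≥0∞ := fun s => volume {x | s < F x} with hνf
  set νg : ℝ → ℝ≥0∞ := fun s => volume {x | s < G x} with hνg
  set νh : ℝ → ℝ≥0∞ := fun s => volume {z | s < H z} with hνh
  have hνfm : Measurable νf := by
    have : Antitone νf := fun s s' hss' =>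
      measure_mono fun x hx => lt_of_le_of_lt hss' hx
    exact this.measurable
  have hνgm : Measurable νg := by
    have : Antitone νg := fun s s' hss' =>
      measure_mono fun x hx => lt_of_le_of_lt hss' hx
    exact this.measurable
  -- key superlevel inequality
  have key : ∀ s ∈ Ioo (0:ℝ) 1,
      ENNReal.ofReal (1 - t) * νf s + ENNReal.ofReal t * νg s ≤ νh s := by
    rintro s ⟨hs0, hs1⟩
    have hsA : MeasurableSet {x | s < F x} := measurableSet_lt measurable_const hFm
    have hsB : MeasurableSet {x | s < G x} := measurableSet_lt measurable_const hGm
    -- nonemptiness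
    have hAne : {x | s < F x}.Nonempty := by
      have : ENNReal.ofReal s < ⨆ x, f x := by
        rw [hfs]; exact ENNReal.ofReal_lt_one.2 hs1
      obtain ⟨x, hx⟩ := lt_iSup_iff.1 this
      exact ⟨x, (ENNReal.ofReal_lt_iff_lt_toReal hs0.le (hfne x)).1 hx⟩
    have hBne : {x | s < G x}.Nonempty := by
      have : ENNReal.ofReal s < ⨆ x, g x := by
        rw [hgs]; exact ENNReal.ofReal_lt_one.2 hs1
      obtain ⟨x, hx⟩ := lt_iSup_iff.1 this
      exact ⟨x, (ENNReal.ofReal_lt_iff_lt_toReal hs0.le (hgne x)).1 hx⟩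
    -- finiteness via Markov
    have hmark : ∀ (φ : ℝ → ℝ≥0∞), Measurable φ → (∫⁻ x, φ x ≠ ⊤) → (∀ x, φ x ≠ ⊤) →
        volume {x | s < (φ x).toReal} ≠ ⊤ := by
      intro φ hφ hφi hφne
      have hsub : {x | s < (φ x).toReal} ⊆ {x | ENNReal.ofReal s ≤ φ x} := fun x hx =>
        le_of_lt ((ENNReal.ofReal_lt_iff_lt_toReal hs0.le (hφne x)).2 hx)
      refine (lt_of_le_of_lt (measure_mono hsub) ?_).ne
      refine lt_of_le_of_lt (meas_ge_le_lintegral_div hφ.aemeasurable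
        (by simpa using (ENNReal.ofReal_pos.2 hs0).ne') ENNReal.ofReal_ne_top) ?_
      exact ENNReal.div_lt_top hφi (by simpa using (ENNReal.ofReal_pos.2 hs0).ne')
    have hAfin : volume {x | s < F x} ≠ ⊤ := hmark f hf hfi hfne
    have hBfin : volume {x | s < G x} ≠ ⊤ := hmark g hg hgi hgne
    refine PL.level_bound ht0 ht1 hsA hAne hBne hsB hAfin hBfin ?_
    intro x hx y hy
    have hfx : ENNReal.ofReal s < f x :=
      (ENNReal.ofReal_lt_iff_lt_toReal hs0.le (hfne x)).2 hx
    have hgy : ENNReal.ofReal s < g y :=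
      (ENNReal.ofReal_lt_iff_lt_toReal hs0.le (hgne y)).2 hy
    have hstrict : ENNReal.ofReal s < h ((1 - t) * x + t * y) := by
      have e1 : ENNReal.ofReal s ^ (1 - t) * ENNReal.ofReal s ^ t = ENNReal.ofReal s := by
        rw [← ENNReal.rpow_add _ _ (by simpa using (ENNReal.ofReal_pos.2 hs0).ne')
          ENNReal.ofReal_ne_top]
        norm_num
      calc ENNReal.ofReal s = ENNReal.ofReal s ^ (1 - t) * ENNReal.ofReal s ^ t := e1.symm
        _ < f x ^ (1 - t) * g y ^ t :=
            ENNReal.mul_lt_mul (ENNReal.rpow_lt_rpow hfx h1t) (ENNReal.rpow_lt_rpow hgy ht0)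
        _ ≤ h ((1 - t) * x + t * y) := hyp x y
    have : ENNReal.ofReal s < h1 ((1 - t) * x + t * y) :=
      lt_min hstrict (ENNReal.ofReal_lt_one.2 hs1)
    exact (ENNReal.ofReal_lt_iff_lt_toReal hs0.le (hh1ne _)).1 this
  -- tail vanishing
  have tailF : ∀ s ∈ Ici (1:ℝ), νf s = 0 := by
    intro s hs
    have : {x | s < F x} = (∅ : Set ℝ) := by
      ext x
      simp only [mem_setOf_eq, mem_empty_iff_false, iff_false, not_lt]
      calc F x ≤ (1:ℝ≥0∞).toReal := ENNReal.toReal_mono ENNReal.one_ne_top (hfle x)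
        _ = 1 := by simp
        _ ≤ s := hs
    rw [hνf]; simp only [this, measure_empty]
  have tailG : ∀ s ∈ Ici (1:ℝ), νg s = 0 := by
    intro s hs
    have : {x | s < G x} = (∅ : Set ℝ) := by
      ext x
      simp only [mem_setOf_eq, mem_empty_iff_false, iff_false, not_lt]
      calc G x ≤ (1:ℝ≥0∞).toReal := ENNReal.toReal_mono ENNReal.one_ne_top (hgle x)
        _ = 1 := by simp
        _ ≤ s := hs
    rw [hνg]; simp only [this, measure_empty]
  -- splitting Ioi 0
  have hsplit : Ioi (0:ℝ) = Ioo 0 1 ∪ Ici 1 := by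
    ext s
    simp only [mem_Ioi, mem_Ioo, mem_union, mem_Ici]
    constructor
    · intro hs; rcases lt_or_ge s 1 with h' | h'
      · exact Or.inl ⟨hs, h'⟩
      · exact Or.inr h'
    · rintro (⟨h', _⟩ | h') <;> linarith
  have hdisj : Disjoint (Ioo (0:ℝ) 1) (Ici 1) := by
    rw [Set.disjoint_left]
    rintro s ⟨_, hs1⟩ hs1'
    exact absurd hs1' (not_le.2 hs1)
  have splitInt : ∀ (ν : ℝ → ℝ≥0∞), (∀ s ∈ Ici (1:ℝ), ν s = 0) →
      ∫⁻ s in Ioi (0:ℝ), ν s = ∫⁻ s in Ioo (0:ℝ) 1, ν s := by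
    intro ν hν
    rw [hsplit, lintegral_union measurableSet_Ici hdisj]
    have : ∫⁻ s in Ici (1:ℝ), ν s = 0 := by
      have hle : ∫⁻ s in Ici (1:ℝ), ν s ≤ ∫⁻ s in Ici (1:ℝ), 0 :=
        setLIntegral_mono' measurableSet_Ici fun s hs => (hν s hs).le
      simpa using hle
    rw [this, add_zero]
  -- put everything together
  have layF' : ∫⁻ x, f x = ∫⁻ s in Ioo (0:ℝ) 1, νf s := by
    rw [layF]; exact splitInt νf tailF
  have layG' : ∫⁻ x, g x = ∫⁻ s in Ioo (0:ℝ) 1, νg s := by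
    rw [layG]; exact splitInt νg tailG
  calc ENNReal.ofReal (1 - t) * (∫⁻ x, f x) + ENNReal.ofReal t * (∫⁻ x, g x)
      = ENNReal.ofReal (1 - t) * (∫⁻ s in Ioo (0:ℝ) 1, νf s)
        + ENNReal.ofReal t * (∫⁻ s in Ioo (0:ℝ) 1, νg s) := by
        rw [layF', layG']
    _ = ∫⁻ s in Ioo (0:ℝ) 1, (ENNReal.ofReal (1 - t) * νf s + ENNReal.ofReal t * νg s) := by
        rw [lintegral_add_left (hνfm.const_mul _), lintegral_const_mul _ hνfm,
          lintegral_const_mul _ hνgm]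
    _ ≤ ∫⁻ s in Ioo (0:ℝ) 1, νh s := setLIntegral_mono' measurableSet_Ioo key
    _ ≤ ∫⁻ s in Ioi (0:ℝ), νh s := lintegral_mono_set (by
        rintro s ⟨hs0, _⟩; exact hs0)
    _ = ∫⁻ z, h1 z := layH.symm
    _ ≤ ∫⁻ z, h z := lintegral_mono fun z => min_le_left _ _

/-- The Prékopa–Leindler property of a measure space with real module structure. -/
def PLprop (E : Type*) [MeasureSpace E] [AddCommGroup E] [Module ℝ E] : Prop :=
  ∀ t : ℝ, 0 < t → t < 1 → ∀ f g h : E → ℝ≥0∞,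
    Measurable f → Measurable g → Measurable h →
    (∀ x y, f x ^ (1 - t) * g y ^ t ≤ h ((1 - t) • x + t • y)) →
    (∫⁻ x, f x) ^ (1 - t) * (∫⁻ x, g x) ^ t ≤ ∫⁻ x, h x

/-- 1-D PL inequality for bounded compactly-dominated data. -/
lemma PL.dim1_bounded {t : ℝ} (ht0 : 0 < t) (ht1 : t < 1) {f g h : ℝ → ℝ≥0∞}
    (hf : Measurable f) (hg : Measurable g) (hh : Measurable h)
    (hfs : (⨆ x, f x) ≠ ⊤) (hgs : (⨆ x, g x) ≠ ⊤)
    (hfi : ∫⁻ x, f x ≠ ⊤) (hgi : ∫⁻ x, g x ≠ ⊤)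
    (hyp : ∀ x y, f x ^ (1 - t) * g y ^ t ≤ h ((1 - t) * x + t * y)) :
    (∫⁻ x, f x) ^ (1 - t) * (∫⁻ x, g x) ^ t ≤ ∫⁻ x, h x := by
  have h1t : (0:ℝ) < 1 - t := by linarith
  set Mf := ⨆ x, f x with hMf
  set Mg := ⨆ x, g x with hMg
  rcases eq_or_ne Mf 0 with hMf0 | hMf0
  · have : ∫⁻ x, f x = 0 := by
      have : ∀ x, f x = 0 := fun x => le_antisymm (hMf0 ▸ le_iSup f x) (zero_le)
      simp [this]
    rw [this, ENNReal.zero_rpow_of_pos h1t, zero_mul]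
    exact zero_le
  rcases eq_or_ne Mg 0 with hMg0 | hMg0
  · have : ∫⁻ x, g x = 0 := by
      have : ∀ x, g x = 0 := fun x => le_antisymm (hMg0 ▸ le_iSup g x) (zero_le)
      simp [this]
    rw [this, ENNReal.zero_rpow_of_pos ht0, mul_zero]
    exact zero_le
  have hfleM : ∀ x, f x ≤ Mf := fun x => le_iSup f x
  have hgleM : ∀ x, g x ≤ Mg := fun x => le_iSup g x
  have hfne : ∀ x, f x ≠ ⊤ := fun x => ((hfleM x).trans_lt (lt_top_iff_ne_top.2 hfs)).ne
  have hgne : ∀ x, g x ≠ ⊤ := fun x => ((hgleM x).trans_lt (lt_top_iff_ne_top.2 hgs)).ne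
  have hMfinv_ne_top : Mf⁻¹ ≠ ⊤ := by simp [hMf0]
  have hMginv_ne_top : Mg⁻¹ ≠ ⊤ := by simp [hMg0]
  set K : ℝ≥0∞ := Mf ^ (1 - t) * Mg ^ t with hK
  have rpow_ne_zero : ∀ (a : ℝ≥0∞) (c : ℝ), a ≠ 0 → a ≠ ⊤ → a ^ c ≠ 0 := by
    intro a c ha ha' hc
    rcases ENNReal.rpow_eq_zero_iff.1 hc with ⟨h1, _⟩ | ⟨h1, _⟩
    exacts [ha h1, ha' h1]
  have rpow_ne_top : ∀ (a : ℝ≥0∞) (c : ℝ), a ≠ 0 → a ≠ ⊤ → a ^ c ≠ ⊤ := by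
    intro a c ha ha' hc
    rcases ENNReal.rpow_eq_top_iff.1 hc with ⟨h1, _⟩ | ⟨h1, _⟩
    exacts [ha h1, ha' h1]
  have hK0 : K ≠ 0 :=
    mul_ne_zero (rpow_ne_zero _ _ hMf0 hfs) (rpow_ne_zero _ _ hMg0 hgs)
  have hKtop : K ≠ ⊤ :=
    ENNReal.mul_ne_top (rpow_ne_top _ _ hMf0 hfs) (rpow_ne_top _ _ hMg0 hgs)
  -- normalized functions
  set f' : ℝ → ℝ≥0∞ := fun x => Mf⁻¹ * f x with hf'def
  set g' : ℝ → ℝ≥0∞ := fun x => Mg⁻¹ * g x with hg'def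
  set h' : ℝ → ℝ≥0∞ := fun z => K⁻¹ * h z with hh'def
  have hf' : Measurable f' := hf.const_mul _
  have hg' : Measurable g' := hg.const_mul _
  have hh' : Measurable h' := hh.const_mul _
  have hf's : ⨆ x, f' x = 1 := by
    rw [hf'def, ← ENNReal.mul_iSup, ← hMf, ENNReal.inv_mul_cancel hMf0 hfs]
  have hg's : ⨆ x, g' x = 1 := by
    rw [hg'def, ← ENNReal.mul_iSup, ← hMg, ENNReal.inv_mul_cancel hMg0 hgs]
  have hf'int : ∫⁻ x, f' x = Mf⁻¹ * ∫⁻ x, f x := lintegral_const_mul _ hf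
  have hg'int : ∫⁻ x, g' x = Mg⁻¹ * ∫⁻ x, g x := lintegral_const_mul _ hg
  have hh'int : ∫⁻ z, h' z = K⁻¹ * ∫⁻ z, h z := lintegral_const_mul _ hh
  have hf'i : ∫⁻ x, f' x ≠ ⊤ := by rw [hf'int]; exact ENNReal.mul_ne_top hMfinv_ne_top hfi
  have hg'i : ∫⁻ x, g' x ≠ ⊤ := by rw [hg'int]; exact ENNReal.mul_ne_top hMginv_ne_top hgi
  -- hypothesis for normalized functions
  have hKinv : Mf⁻¹ ^ (1 - t) * Mg⁻¹ ^ t = K⁻¹ := by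
    rw [ENNReal.inv_rpow, ENNReal.inv_rpow, hK,
      ENNReal.mul_inv (Or.inl (rpow_ne_zero _ _ hMf0 hfs)) (Or.inl (rpow_ne_top _ _ hMf0 hfs))]
  have hyp' : ∀ x y, f' x ^ (1 - t) * g' y ^ t ≤ h' ((1 - t) * x + t * y) := by
    intro x y
    have e1 : f' x ^ (1 - t) = Mf⁻¹ ^ (1 - t) * f x ^ (1 - t) :=
      ENNReal.mul_rpow_of_ne_top hMfinv_ne_top (hfne x) _
    have e2 : g' y ^ t = Mg⁻¹ ^ t * g y ^ t :=
      ENNReal.mul_rpow_of_ne_top hMginv_ne_top (hgne y) _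
    calc f' x ^ (1 - t) * g' y ^ t
        = (Mf⁻¹ ^ (1 - t) * Mg⁻¹ ^ t) * (f x ^ (1 - t) * g y ^ t) := by
          rw [e1, e2]; ring
      _ = K⁻¹ * (f x ^ (1 - t) * g y ^ t) := by rw [hKinv]
      _ ≤ K⁻¹ * h ((1 - t) * x + t * y) := mul_le_mul_right (hyp x y) _
  have norm := PL.dim1_norm ht0 ht1 hf' hg' hh' hf's hg's hf'i hg'i hyp'
  -- AM-GM
  have amgm := PL.engm (∫⁻ x, f' x) (∫⁻ x, g' x) ht0 ht1
  have main : (∫⁻ x, f' x) ^ (1 - t) * (∫⁻ x, g' x) ^ t ≤ K⁻¹ * ∫⁻ z, h z := by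
    rw [← hh'int]; exact le_trans amgm norm
  -- un-normalize
  have lhs_eq : (∫⁻ x, f' x) ^ (1 - t) * (∫⁻ x, g' x) ^ t
      = K⁻¹ * ((∫⁻ x, f x) ^ (1 - t) * (∫⁻ x, g x) ^ t) := by
    rw [hf'int, hg'int, ENNReal.mul_rpow_of_ne_top hMfinv_ne_top hfi,
      ENNReal.mul_rpow_of_ne_top hMginv_ne_top hgi, ← hKinv]
    ring
  rw [lhs_eq] at main
  have hKinv0 : K⁻¹ ≠ 0 := ENNReal.inv_ne_zero.2 hKtop
  have hKinvtop : K⁻¹ ≠ ⊤ := ENNReal.inv_ne_top.2 hK0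
  exact (ENNReal.mul_le_mul_iff_right hKinv0 hKinvtop).1 main

/-- The truncation of an `ℝ≥0∞`-valued function on `ℝ`. -/
def PL.trunc (f : ℝ → ℝ≥0∞) (n : ℕ) : ℝ → ℝ≥0∞ :=
  (Icc (-(n:ℝ)) n).indicator fun x => min (f x) n

lemma PL.trunc_le (f : ℝ → ℝ≥0∞) (n : ℕ) : ∀ x, PL.trunc f n x ≤ f x := by
  intro x
  by_cases hx : x ∈ Icc (-(n:ℝ)) n
  · rw [PL.trunc, indicator_of_mem hx]; exact min_le_left _ _
  · rw [PL.trunc, indicator_of_notMem hx]; exact zero_le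

lemma PL.trunc_meas {f : ℝ → ℝ≥0∞} (hf : Measurable f) (n : ℕ) :
    Measurable (PL.trunc f n) :=
  (hf.min measurable_const).indicator measurableSet_Icc

lemma PL.trunc_mono (f : ℝ → ℝ≥0∞) : Monotone (PL.trunc f) := by
  intro n m hnm x
  by_cases hx : x ∈ Icc (-(n:ℝ)) n
  · have hx' : x ∈ Icc (-(m:ℝ)) m := by
      obtain ⟨h1, h2⟩ := hx
      constructor
      · have : (n:ℝ) ≤ m := by exact_mod_cast hnm
        linarith
      · have : (n:ℝ) ≤ m := by exact_mod_cast hnm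
        linarith
    rw [PL.trunc, PL.trunc, indicator_of_mem hx, indicator_of_mem hx']
    exact min_le_min le_rfl (by exact_mod_cast Nat.cast_le.2 hnm)
  · rw [PL.trunc, indicator_of_notMem hx]
    exact zero_le

lemma PL.trunc_sup_ne_top (f : ℝ → ℝ≥0∞) (n : ℕ) : (⨆ x, PL.trunc f n x) ≠ ⊤ := by
  have : ∀ x, PL.trunc f n x ≤ n := by
    intro x
    by_cases hx : x ∈ Icc (-(n:ℝ)) n
    · rw [PL.trunc, indicator_of_mem hx]; exact min_le_right _ _
    · rw [PL.trunc, indicator_of_notMem hx]; exact zero_le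
  exact ((iSup_le this).trans_lt (ENNReal.natCast_lt_top n)).ne
lemma PL.trunc_int_ne_top {f : ℝ → ℝ≥0∞} (hf : Measurable f) (n : ℕ) :
    ∫⁻ x, PL.trunc f n x ≠ ⊤ := by
  have h1 : ∫⁻ x, PL.trunc f n x ≤ ∫⁻ x, (Icc (-(n:ℝ)) n).indicator (fun _ => (n:ℝ≥0∞)) x := by
    refine lintegral_mono fun x => ?_
    by_cases hx : x ∈ Icc (-(n:ℝ)) n
    · rw [PL.trunc, indicator_of_mem hx, indicator_of_mem hx]; exact min_le_right _ _
    · rw [PL.trunc, indicator_of_notMem hx, indicator_of_notMem hx]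
  rw [lintegral_indicator measurableSet_Icc] at h1
  refine (h1.trans_lt ?_).ne
  rw [setLIntegral_const]
  exact ENNReal.mul_lt_top (ENNReal.natCast_lt_top n) (by rw [Real.volume_Icc]; exact ENNReal.ofReal_lt_top)

lemma PL.trunc_sup_eq (f : ℝ → ℝ≥0∞) (x : ℝ) : (⨆ n, PL.trunc f n x) = f x := by
  refine le_antisymm (iSup_le fun n => PL.trunc_le f n x) ?_
  have hmem : ∀ n : ℕ, n ≥ ⌈|x|⌉₊ → x ∈ Icc (-(n:ℝ)) n := by
    intro n hn
    have h1 : |x| ≤ n := le_trans (Nat.le_ceil _) (by exact_mod_cast hn)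
    exact ⟨by cases abs_le.1 h1; linarith, (abs_le.1 h1).2⟩
  have step : ∀ n : ℕ, min (f x) n ≤ ⨆ m, PL.trunc f m x := by
    intro n
    refine le_trans ?_ (le_iSup _ (max n ⌈|x|⌉₊))
    rw [PL.trunc, indicator_of_mem (hmem _ (le_max_right _ _))]
    exact min_le_min le_rfl (by exact_mod_cast Nat.cast_le.2 (le_max_left _ _))
  rcases eq_or_ne (f x) ⊤ with htop | htop
  · -- f x = ⊤ : min (f x) n = n, and ⨆ n = ⊤
    have : ∀ n : ℕ, (n : ℝ≥0∞) ≤ ⨆ m, PL.trunc f m x := fun n => by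
      have := step n
      rwa [htop, min_eq_right le_top] at this
    rw [htop]
    have : (⊤ : ℝ≥0∞) ≤ ⨆ m, PL.trunc f m x := by
      rw [← ENNReal.iSup_natCast]
      exact iSup_le fun n => this n
    exact this
  · obtain ⟨n, hn⟩ := ENNReal.exists_nat_gt htop
    have := step n
    rwa [min_eq_left hn.le] at this

lemma PL.dim1 : PLprop ℝ := by
  intro t ht0 ht1 f g h hf hg hh hyp
  have h1t : (0:ℝ) < 1 - t := by linarith
  have hyp' : ∀ x y, f x ^ (1 - t) * g y ^ t ≤ h ((1 - t) * x + t * y) := by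
    intro x y; simpa [smul_eq_mul] using hyp x y
  rcases eq_or_ne (∫⁻ x, f x) 0 with hf0 | hf0
  · rw [hf0, ENNReal.zero_rpow_of_pos h1t, zero_mul]; exact zero_le
  rcases eq_or_ne (∫⁻ x, g x) 0 with hg0 | hg0
  · rw [hg0, ENNReal.zero_rpow_of_pos ht0, mul_zero]; exact zero_le
  -- truncations
  have key : ∀ n : ℕ, (∫⁻ x, PL.trunc f n x) ^ (1 - t) * (∫⁻ x, PL.trunc g n x) ^ t
      ≤ ∫⁻ x, h x := by
    intro n
    refine PL.dim1_bounded ht0 ht1 (PL.trunc_meas hf n) (PL.trunc_meas hg n) hh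
      (PL.trunc_sup_ne_top f n) (PL.trunc_sup_ne_top g n)
      (PL.trunc_int_ne_top hf n) (PL.trunc_int_ne_top hg n) ?_
    intro x y
    refine le_trans (mul_le_mul'
      (ENNReal.rpow_le_rpow (PL.trunc_le f n x) h1t.le)
      (ENNReal.rpow_le_rpow (PL.trunc_le g n y) ht0.le)) (hyp' x y)
  -- monotone convergence
  have hFlim : Tendsto (fun n => ∫⁻ x, PL.trunc f n x) atTop (𝓝 (∫⁻ x, f x)) := by
    have : ∫⁻ x, f x = ⨆ n, ∫⁻ x, PL.trunc f n x := by
      rw [← lintegral_iSup (fun n => PL.trunc_meas hf n)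
        (fun n m hnm x => PL.trunc_mono f hnm x)]
      exact lintegral_congr fun x => (PL.trunc_sup_eq f x).symm
    rw [this]
    exact tendsto_atTop_iSup fun n m hnm =>
      lintegral_mono fun x => PL.trunc_mono f hnm x
  have hGlim : Tendsto (fun n => ∫⁻ x, PL.trunc g n x) atTop (𝓝 (∫⁻ x, g x)) := by
    have : ∫⁻ x, g x = ⨆ n, ∫⁻ x, PL.trunc g n x := by
      rw [← lintegral_iSup (fun n => PL.trunc_meas hg n)
        (fun n m hnm x => PL.trunc_mono g hnm x)]
      exact lintegral_congr fun x => (PL.trunc_sup_eq g x).symm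
    rw [this]
    exact tendsto_atTop_iSup fun n m hnm =>
      lintegral_mono fun x => PL.trunc_mono g hnm x
  have hrf : Tendsto (fun n => (∫⁻ x, PL.trunc f n x) ^ (1 - t)) atTop
      (𝓝 ((∫⁻ x, f x) ^ (1 - t))) :=
    (ENNReal.continuous_rpow_const.tendsto _).comp hFlim
  have hrg : Tendsto (fun n => (∫⁻ x, PL.trunc g n x) ^ t) atTop
      (𝓝 ((∫⁻ x, g x) ^ t)) :=
    (ENNReal.continuous_rpow_const.tendsto _).comp hGlim
  have hne1 : (∫⁻ x, f x) ^ (1 - t) ≠ 0 := by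
    intro hc
    rcases ENNReal.rpow_eq_zero_iff.1 hc with ⟨h1, _⟩ | ⟨_, h2⟩
    exacts [hf0 h1, by linarith]
  have hne2 : (∫⁻ x, g x) ^ t ≠ 0 := by
    intro hc
    rcases ENNReal.rpow_eq_zero_iff.1 hc with ⟨h1, _⟩ | ⟨_, h2⟩
    exacts [hg0 h1, by linarith]
  have hmul : Tendsto (fun n => (∫⁻ x, PL.trunc f n x) ^ (1 - t) *
      (∫⁻ x, PL.trunc g n x) ^ t) atTop
      (𝓝 ((∫⁻ x, f x) ^ (1 - t) * (∫⁻ x, g x) ^ t)) :=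
    ENNReal.Tendsto.mul hrf (Or.inl hne1) hrg (Or.inl hne2)
  exact le_of_tendsto hmul (Filter.Eventually.of_forall key)

lemma PL.prod {α β : Type*} [MeasureSpace α] [MeasureSpace β]
    [AddCommGroup α] [Module ℝ α] [AddCommGroup β] [Module ℝ β]
    [SFinite (volume : Measure β)]
    (hα : PLprop α) (hβ : PLprop β) : PLprop (α × β) := by
  intro t ht0 ht1 f g h hf hg hh hyp
  have hvol : (volume : Measure (α × β)) = (volume : Measure α).prod volume :=
    Measure.volume_eq_prod α β
  have hFm : Measurable fun x => ∫⁻ y, f (x, y) := hf.lintegral_prod_right'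
  have hGm : Measurable fun x => ∫⁻ y, g (x, y) := hg.lintegral_prod_right'
  have hHm : Measurable fun x => ∫⁻ y, h (x, y) := hh.lintegral_prod_right'
  have ef : ∫⁻ p, f p = ∫⁻ x, ∫⁻ y, f (x, y) := by
    rw [hvol]; exact lintegral_prod f hf.aemeasurable
  have eg : ∫⁻ p, g p = ∫⁻ x, ∫⁻ y, g (x, y) := by
    rw [hvol]; exact lintegral_prod g hg.aemeasurable
  have eh : ∫⁻ p, h p = ∫⁻ x, ∫⁻ y, h (x, y) := by
    rw [hvol]; exact lintegral_prod h hh.aemeasurable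
  rw [ef, eg, eh]
  refine hα t ht0 ht1 _ _ _ hFm hGm hHm ?_
  intro x₁ x₂
  refine hβ t ht0 ht1 (fun z => f (x₁, z)) (fun w => g (x₂, w))
    (fun w => h ((1 - t) • x₁ + t • x₂, w))
    (hf.comp measurable_prodMk_left) (hg.comp measurable_prodMk_left)
    (hh.comp measurable_prodMk_left) ?_
  intro z w
  have := hyp (x₁, z) (x₂, w)
  simpa [Prod.smul_mk, Prod.mk_add_mk] using this

lemma PL.transfer {α β : Type*} [MeasureSpace α] [MeasureSpace β]
    [AddCommGroup α] [Module ℝ α] [AddCommGroup β] [Module ℝ β]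
    (e : α ≃ᵐ β) (he : MeasurePreserving e volume volume)
    (hlin : ∀ (c d : ℝ) (x y : α), e (c • x + d • y) = c • e x + d • e y)
    (hβ : PLprop β) : PLprop α := by
  intro t ht0 ht1 f g h hf hg hh hyp
  have hsymm : ∀ (c d : ℝ) (u v : β), e.symm (c • u + d • v) = c • e.symm u + d • e.symm v := by
    intro c d u v
    apply e.injective
    rw [e.apply_symm_apply, hlin, e.apply_symm_apply, e.apply_symm_apply]
  have key : ∀ (φ : α → ℝ≥0∞), Measurable φ → ∫⁻ x, φ x = ∫⁻ u, φ (e.symm u) := by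
    intro φ hφ
    calc ∫⁻ x, φ x = ∫⁻ x, (φ ∘ e.symm) (e x) := by simp
    _ = ∫⁻ u, (φ ∘ e.symm) u := he.lintegral_comp (hφ.comp e.symm.measurable)
    _ = ∫⁻ u, φ (e.symm u) := rfl
  rw [key f hf, key g hg, key h hh]
  refine hβ t ht0 ht1 (fun u => f (e.symm u)) (fun u => g (e.symm u)) (fun u => h (e.symm u))
    (hf.comp e.symm.measurable) (hg.comp e.symm.measurable) (hh.comp e.symm.measurable) ?_
  intro u v
  have h2 := hyp (e.symm u) (e.symm v)
  rw [← hsymm] at h2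
  exact h2

lemma PL.pi : ∀ n : ℕ, PLprop (Fin n → ℝ) := by
  intro n
  induction n with
  | zero =>
    intro t ht0 ht1 f g h hf hg hh hyp
    have hv : (volume : Measure (Fin 0 → ℝ)) = Measure.dirac 0 := by
      rw [volume_pi]; exact Measure.pi_of_empty _ 0
    rw [hv, lintegral_dirac' _ hf, lintegral_dirac' _ hg, lintegral_dirac' _ hh]
    have := hyp 0 0
    simpa using this
  | succ n ih =>
    refine PL.transfer (MeasurableEquiv.piFinSuccAbove (fun _ : Fin (n+1) => ℝ) 0)
      (volume_preserving_piFinSuccAbove (fun _ : Fin (n+1) => ℝ) 0) ?_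
      (PL.prod PL.dim1 ih)
    intro c d x y
    rfl

lemma PL.rd (n : ℕ) : PLprop (Rd n) := by
  refine PL.transfer (MeasurableEquiv.toLp 2 (Fin n → ℝ)).symm
    (EuclideanSpace.volume_preserving_symm_measurableEquiv_toLp (Fin n)) ?_ (PL.pi n)
  intro c d x y
  rfl

end PLaux

/-- **Prékopa's theorem**: marginals of log-concave functions are log-concave.  The
marginal `x ↦ ∫ f(x, y) dy` takes values in `[0, ∞]`, and its log-concavity is expressed
multiplicatively with `ℝ≥0∞`-valued powers. -/
theorem statement2 (d₁ d₂ : ℕ) (f : Rd d₁ × Rd d₂ → ℝ)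
    (hmeas : Measurable f) (hlc : IsLogConcaveFn f) :
    ∀ x y : Rd d₁, ∀ t : ℝ, t ∈ Set.Icc (0:ℝ) 1 →
      (∫⁻ z, ENNReal.ofReal (f (x, z))) ^ (1 - t) *
        (∫⁻ z, ENNReal.ofReal (f (y, z))) ^ t
        ≤ ∫⁻ z, ENNReal.ofReal (f ((1 - t) • x + t • y, z)) := by
  intro x y t ht
  obtain ⟨ht0, ht1⟩ := ht
  rcases eq_or_lt_of_le ht0 with rfl | ht0'
  · simp only [sub_zero, ENNReal.rpow_one, ENNReal.rpow_zero, mul_one, one_smul,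
      zero_smul, add_zero]
    exact le_rfl
  rcases eq_or_lt_of_le ht1 with rfl | ht1'
  · simp only [sub_self, ENNReal.rpow_zero, ENNReal.rpow_one, one_mul, one_smul,
      zero_smul, zero_add]
    exact le_rfl
  have hm : ∀ w : Rd d₁, Measurable fun z : Rd d₂ => ENNReal.ofReal (f (w, z)) := by
    intro w
    exact ENNReal.measurable_ofReal.comp (hmeas.comp measurable_prodMk_left)
  refine PL.rd d₂ t ht0' ht1' _ _ _ (hm x) (hm y) (hm _) ?_
  intro z w
  have hpt := hlc.2 (x, z) (y, w) t ⟨ht0, ht1⟩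
  have hsm : (1 - t) • ((x, z) : Rd d₁ × Rd d₂) + t • (y, w)
      = ((1 - t) • x + t • y, (1 - t) • z + t • w) := rfl
  rw [hsm] at hpt
  calc ENNReal.ofReal (f (x, z)) ^ (1 - t) * ENNReal.ofReal (f (y, w)) ^ t
      = ENNReal.ofReal (f (x, z) ^ (1 - t) * f (y, w) ^ t) := by
        rw [ENNReal.ofReal_mul (Real.rpow_nonneg (hlc.1 _) _),
          ENNReal.ofReal_rpow_of_nonneg (hlc.1 _) (by linarith),
          ENNReal.ofReal_rpow_of_nonneg (hlc.1 _) ht0]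
    _ ≤ ENNReal.ofReal (f ((1 - t) • x + t • y, (1 - t) • z + t • w)) :=
        ENNReal.ofReal_le_ofReal hpt
end
end

section
/- Let Φ denote the class of upper semi-continuous, concave functions φ : ℝ^d → [-∞, ∞) with φ(x) → -∞ as ‖x‖ → ∞, and for a probability measure P on ℝ^d let L(φ, P) := ∫_{ℝ^d} φ dP − ∫_{ℝ^d} e^φ dx and L*(P) := sup_{φ ∈ Φ} L(φ, P). Then: (i) if ∫_{ℝ^d} ‖x‖ dP(x) = ∞, then L*(P) = −∞; (ii) if ∫_{ℝ^d} ‖x‖ dP(x) < ∞ but P(H) = 1 for some hyperplane H ⊆ ℝ^d (an affine subspace of dimension d − 1), then L*(P) = ∞. -/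
open MeasureTheory Filter Set
open scoped ENNReal Topology

noncomputable section

lemma epos_coe (r : ℝ) : epos (r : EReal) = ENNReal.ofReal r := by
  simp [epos]

lemma expE_coe (r : ℝ) : expE (r : EReal) = ENNReal.ofReal (Real.exp r) := by
  simp [expE]

lemma epos_mono_ofReal {r : ℝ} {a : EReal} (h : (r : EReal) ≤ a) :
    ENNReal.ofReal r ≤ epos a := by
  induction a using EReal.rec with
  | bot => simp at h
  | coe x => rw [epos_coe]; exact ENNReal.ofReal_le_ofReal (EReal.coe_le_coe_iff.1 h)
  | top => simp [epos]

lemma ereal_le_div {a : EReal} {t c : ℝ} (ht : 0 < t) (h : (t : EReal) * a ≤ (c : EReal)) :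
    a ≤ ((c / t : ℝ) : EReal) := by
  induction a using EReal.rec with
  | bot => exact bot_le
  | coe x =>
      rw [← EReal.coe_mul, EReal.coe_le_coe_iff] at h
      refine EReal.coe_le_coe_iff.2 ?_
      rw [le_div_iff₀ ht]; linarith
  | top => rw [EReal.coe_mul_top_of_pos ht] at h; simp at h

lemma ereal_extract {p s : ℝ} {q : EReal} (h : (p : EReal) + q ≤ (s : EReal)) :
    q ≤ ((s - p : ℝ) : EReal) := by
  induction q using EReal.rec with
  | bot => exact bot_le
  | coe x =>
      rw [← EReal.coe_add, EReal.coe_le_coe_iff] at h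
      exact EReal.coe_le_coe_iff.2 (by linarith)
  | top => rw [EReal.coe_add_top] at h; simp at h

lemma ereal_eq_top_of_forall_le {x : EReal} (h : ∀ K : ℝ, (K : EReal) ≤ x) : x = ⊤ := by
  rw [EReal.eq_top_iff_forall_lt]
  intro y
  exact lt_of_lt_of_le (EReal.coe_lt_coe_iff.2 (lt_add_one y)) (h (y + 1))

lemma phi_neg_bound {E : Type*} [NormedAddCommGroup E] [NormedSpace ℝ E]
    {φ : E → EReal} (h : MemPhi φ) :
    ∃ b A : ℝ, 0 < b ∧ ∀ x, ENNReal.ofReal (b * ‖x‖ - A) ≤ epos (-(φ x)) := by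
  obtain ⟨hnt, _husc, hconc, htend⟩ := h
  by_cases hbot : ∀ x, φ x = ⊥
  · refine ⟨1, 0, one_pos, fun x => ?_⟩
    rw [hbot x]
    simp [epos]
  push_neg at hbot
  obtain ⟨x0, h0⟩ := hbot
  set m := (φ x0).toReal with hm_def
  have hm : φ x0 = (m : EReal) := (EReal.coe_toReal (hnt x0) h0).symm
  -- eventual smallness
  have h1 : ∀ᶠ x in comap (fun x : E => ‖x‖) atTop, φ x < ((m - 1 : ℝ) : EReal) :=
    htend.eventually_lt_const (bot_lt_iff_ne_bot.2 (EReal.coe_ne_bot _))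
  rw [eventually_comap] at h1
  rw [eventually_atTop] at h1
  obtain ⟨R0, hR0⟩ := h1
  set R : ℝ := max R0 (‖x0‖ + 1) with hR_def
  have hRx0 : ‖x0‖ + 1 ≤ R := le_max_right _ _
  have hRpos : 0 < R := lt_of_lt_of_le (by positivity) hRx0
  have hfar : ∀ x : E, 2 * R ≤ ‖x - x0‖ → φ x ≤ ((m - ‖x - x0‖ / (2 * R) : ℝ) : EReal) := by
    intro x hx
    have hd : 0 < ‖x - x0‖ := lt_of_lt_of_le (by linarith) hx
    set t : ℝ := (R + ‖x0‖) / ‖x - x0‖ with ht_def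
    have ht0 : 0 < t := by positivity
    have htd : t * ‖x - x0‖ = R + ‖x0‖ := div_mul_cancel₀ _ hd.ne'
    have ht1 : t ≤ 1 := by
      rw [div_le_one hd]; linarith [norm_nonneg x0]
    have hu_eq : (1 - t) • x0 + t • x = x0 + t • (x - x0) := by
      rw [smul_sub]; module
    have hu_norm : R ≤ ‖(1 - t) • x0 + t • x‖ := by
      rw [hu_eq]
      have h1 : ‖t • (x - x0)‖ = t * ‖x - x0‖ := by
        rw [norm_smul, Real.norm_of_nonneg ht0.le]
      have h2 : ‖t • (x - x0)‖ - ‖x0‖ ≤ ‖x0 + t • (x - x0)‖ := by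
        have := norm_add_le (-(x0 : E)) (x0 + t • (x - x0))
        simp only [neg_add_cancel_left, norm_neg] at this
        linarith [this]
      rw [h1, htd] at h2
      linarith
    have hφu : φ ((1 - t) • x0 + t • x) < ((m - 1 : ℝ) : EReal) := by
      refine hR0 ‖(1 - t) • x0 + t • x‖ (le_trans (le_max_left _ _) hu_norm) _ rfl
    have hcc := hconc x0 x t ⟨ht0.le, ht1⟩
    rw [hm, ← EReal.coe_mul] at hcc
    have hmul : ((t : ℝ) : EReal) * φ x ≤ (((m - 1) - (1 - t) * m : ℝ) : EReal) :=
      ereal_extract (le_of_lt (lt_of_le_of_lt hcc hφu))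
    have hdiv := ereal_le_div ht0 hmul
    refine le_trans hdiv (EReal.coe_le_coe_iff.2 ?_)
    rw [div_le_iff₀ ht0]
    have hfrac : t * (‖x - x0‖ / (2 * R)) ≤ 1 := by
      rw [mul_div_assoc'] -- t * ‖x-x0‖ / (2R)
      rw [div_le_one (by positivity), htd]
      linarith
    nlinarith
  refine ⟨1 / (2 * R), |m| + (1 / (2 * R)) * ‖x0‖ + 1, by positivity, fun x => ?_⟩
  set b : ℝ := 1 / (2 * R)
  set A : ℝ := |m| + b * ‖x0‖ + 1
  have hb0 : 0 < b := by positivity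
  have hxn : ‖x‖ ≤ ‖x - x0‖ + ‖x0‖ := by
    have := norm_add_le (x - x0) x0
    simpa using this
  by_cases hxf : 2 * R ≤ ‖x - x0‖
  · have hle := hfar x hxf
    have hneg : ((‖x - x0‖ / (2 * R) - m : ℝ) : EReal) ≤ -(φ x) := by
      have h2 : -(((m - ‖x - x0‖ / (2 * R) : ℝ)) : EReal) ≤ -(φ x) :=
        EReal.neg_le_neg_iff.2 hle
      rw [← EReal.coe_neg] at h2
      convert h2 using 2
      ring
    refine le_trans (ENNReal.ofReal_le_ofReal ?_) (epos_mono_ofReal hneg)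
    have : b * ‖x‖ ≤ ‖x - x0‖ / (2 * R) + b * ‖x0‖ := by
      have h3 : b * ‖x‖ ≤ b * (‖x - x0‖ + ‖x0‖) := mul_le_mul_of_nonneg_left hxn hb0.le
      have h4 : b * ‖x - x0‖ = ‖x - x0‖ / (2 * R) := by
        rw [div_eq_mul_inv, mul_comm]; congr 1; simp [b]
      nlinarith
    have habs : m ≤ |m| := le_abs_self m
    simp only [A]
    linarith
  · push_neg at hxf
    have hz : b * ‖x‖ - A ≤ 0 := by
      have h3 : b * ‖x‖ ≤ b * (2 * R) + b * ‖x0‖ := by nlinarith [norm_nonneg x, norm_nonneg x0]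
      have h4 : b * (2 * R) = 1 := by
        simp only [b]; field_simp
      have habs : 0 ≤ |m| := abs_nonneg m
      simp only [A]; linarith
    rw [ENNReal.ofReal_eq_zero.2 hz]
    exact zero_le

lemma hyperplane_null (d : ℕ) (l : Rd d →ₗ[ℝ] ℝ) (c : ℝ) (hl : l ≠ 0) :
    volume {x : Rd d | l x = c} = 0 := by
  obtain ⟨v, hv⟩ : ∃ v : Rd d, l v ≠ 0 := by
    by_contra hc
    push_neg at hc
    exact hl (LinearMap.ext fun x => by simp [hc x])
  set x0 : Rd d := (c / l v) • v with hx0_def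
  have hlx0 : l x0 = c := by
    simp only [hx0_def, _root_.map_smul, smul_eq_mul]
    field_simp
  have hset : {x : Rd d | l x = c} = (fun x : Rd d => x + (-x0)) ⁻¹' (LinearMap.ker l : Set (Rd d)) := by
    ext x
    simp only [mem_setOf_eq, mem_preimage, SetLike.mem_coe, LinearMap.mem_ker, map_add, map_neg,
      hlx0]
    constructor
    · intro h; rw [h]; ring
    · intro h; linarith
  rw [hset, measure_preimage_add_right volume (-x0) _]
  exact Measure.addHaar_submodule volume (LinearMap.ker l)
    (by rwa [Ne, LinearMap.ker_eq_top])

-- integrability of exp(-‖x‖)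

lemma exp_norm_integrable (d : ℕ) :
    Integrable (fun x : Rd d => Real.exp (-‖x‖)) volume := by
  set n : ℕ := d + 1 with hn_def
  have hnr : (Module.finrank ℝ (Rd d) : ℝ) < (n : ℝ) := by
    rw [finrank_euclideanSpace_fin]
    exact_mod_cast lt_add_one d
  have haux : ∀ t : ℝ, 0 ≤ t → Real.exp (-t) ≤ (n : ℝ) ^ n * (1 + t) ^ (-(n : ℝ)) := by
    intro t ht
    have h1t : (0:ℝ) < 1 + t := by linarith
    rw [Real.rpow_neg h1t.le, Real.rpow_natCast]
    have key : (1 + t) ^ n ≤ (n : ℝ) ^ n * Real.exp t := by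
      have hn' : (1:ℝ) ≤ n := by simp [hn_def]
      have h1 : 1 + t ≤ (n : ℝ) * Real.exp (t / n) := by
        have hexp := Real.add_one_le_exp (t / n)
        have h2 : (n:ℝ) * (t / n + 1) ≤ (n:ℝ) * Real.exp (t / n) :=
          mul_le_mul_of_nonneg_left hexp (by positivity)
        have h3 : (n:ℝ) * (t / n + 1) = t + n := by field_simp
        nlinarith
      calc (1 + t) ^ n ≤ ((n : ℝ) * Real.exp (t / n)) ^ n := pow_le_pow_left₀ h1t.le h1 n
        _ = (n : ℝ) ^ n * Real.exp (t / n) ^ n := mul_pow _ _ n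
        _ = (n : ℝ) ^ n * Real.exp t := by
            rw [← Real.exp_nat_mul]
            congr 1
            field_simp
    rw [Real.exp_neg, ← div_eq_mul_inv, le_div_iff₀ (by positivity)]
    calc (Real.exp t)⁻¹ * (1 + t) ^ n ≤ (Real.exp t)⁻¹ * ((n:ℝ)^n * Real.exp t) :=
          mul_le_mul_of_nonneg_left key (by positivity)
      _ = (n:ℝ)^n * ((Real.exp t)⁻¹ * Real.exp t) := by ring
      _ = (n:ℝ)^n := by rw [inv_mul_cancel₀ (Real.exp_pos t).ne']; ring
  refine ((integrable_one_add_norm (μ := volume) hnr).const_mul ((n:ℝ)^n)).mono'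
    ?_ (Eventually.of_forall fun x => ?_)
  · exact (Real.continuous_exp.comp continuous_norm.neg).aestronglyMeasurable
  · rw [Real.norm_of_nonneg (Real.exp_pos _).le]
    exact haux ‖x‖ (norm_nonneg x)

lemma I_tendsto_zero (d : ℕ) (l : Rd d →ₗ[ℝ] ℝ) (c : ℝ) (hl : l ≠ 0) :
    Tendsto (fun n : ℕ => ∫⁻ x : Rd d, ENNReal.ofReal (Real.exp (-‖x‖ - n * |l x - c|)))
      atTop (𝓝 0) := by
  have hlc : Continuous l := l.continuous_of_finiteDimensional
  set F : ℕ → Rd d → ℝ≥0∞ :=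
    fun n x => ENNReal.ofReal (Real.exp (-‖x‖ - n * |l x - c|)) with hF_def
  have hFm : ∀ n, Measurable (F n) := by
    intro n
    apply ENNReal.measurable_ofReal.comp
    exact (Real.continuous_exp.comp
      ((continuous_norm.neg).sub
        (continuous_const.mul ((hlc.sub continuous_const).abs)))).measurable
  have hFb : ∀ n, F n ≤ᵐ[volume] fun x => ENNReal.ofReal (Real.exp (-‖x‖)) := by
    intro n
    refine Eventually.of_forall fun x => ENNReal.ofReal_le_ofReal (Real.exp_le_exp.2 ?_)
    have : (0:ℝ) ≤ n * |l x - c| := by positivity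
    linarith
  have hfin : (∫⁻ x : Rd d, ENNReal.ofReal (Real.exp (-‖x‖))) ≠ ⊤ :=
    (Integrable.lintegral_lt_top (exp_norm_integrable d)).ne
  have hlim : ∀ᵐ x : Rd d, Tendsto (fun n => F n x) atTop (𝓝 0) := by
    have hnull := hyperplane_null d l c hl
    refine (measure_eq_zero_iff_ae_notMem.1 hnull).mono fun x hx => ?_
    have hε : 0 < |l x - c| := abs_pos.2 (sub_ne_zero.2 hx)
    have h2 : Tendsto (fun n : ℕ => (n:ℝ) * |l x - c|) atTop atTop :=
      Tendsto.atTop_mul_const hε tendsto_natCast_atTop_atTop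
    have h3 : Tendsto (fun n : ℕ => -‖x‖ - (n:ℝ) * |l x - c|) atTop atBot := by
      have := tendsto_atBot_add_const_left atTop (-‖x‖) (tendsto_neg_atTop_atBot.comp h2)
      simpa [Function.comp, sub_eq_add_neg] using this
    have h4 : Tendsto (fun n : ℕ => Real.exp (-‖x‖ - (n:ℝ) * |l x - c|)) atTop (𝓝 0) :=
      Real.tendsto_exp_atBot.comp h3
    have h5 := (ENNReal.tendsto_ofReal h4)
    simpa [hF_def] using h5
  have := tendsto_lintegral_of_dominated_convergence _ hFm hFb hfin hlim
  simpa using this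

lemma memPhi_test (d : ℕ) (l : Rd d →ₗ[ℝ] ℝ) (c a : ℝ) (n : ℕ) :
    MemPhi (fun x : Rd d => ((a - ‖x‖ - n * |l x - c| : ℝ) : EReal)) := by
  have hlc : Continuous l := l.continuous_of_finiteDimensional
  have hgc : Continuous (fun x : Rd d => a - ‖x‖ - n * |l x - c|) :=
    (continuous_const.sub continuous_norm).sub
      (continuous_const.mul ((hlc.sub continuous_const).abs))
  refine ⟨fun x => EReal.coe_ne_top _, ?_, ?_, ?_⟩
  · exact (continuous_coe_real_ereal.comp hgc).upperSemicontinuous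
  · intro x y t ht
    rw [← EReal.coe_mul, ← EReal.coe_mul, ← EReal.coe_add, EReal.coe_le_coe_iff]
    obtain ⟨ht0, ht1⟩ := ht
    have hn : ((1:ℝ) - t) • x + t • y = (1 - t) • x + t • y := rfl
    have h1 : ‖(1 - t) • x + t • y‖ ≤ (1 - t) * ‖x‖ + t * ‖y‖ := by
      refine (norm_add_le _ _).trans ?_
      rw [norm_smul, norm_smul, Real.norm_of_nonneg (by linarith), Real.norm_of_nonneg ht0]
    have hl2 : l ((1 - t) • x + t • y) - c = (1 - t) * (l x - c) + t * (l y - c) := by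
      rw [map_add, _root_.map_smul, _root_.map_smul, smul_eq_mul, smul_eq_mul]
      ring
    have h2 : |l ((1 - t) • x + t • y) - c| ≤ (1 - t) * |l x - c| + t * |l y - c| := by
      rw [hl2]
      refine (abs_add_le _ _).trans ?_
      rw [abs_mul, abs_mul, abs_of_nonneg (by linarith : (0:ℝ) ≤ 1 - t), abs_of_nonneg ht0]
    have hn0 : (0:ℝ) ≤ n := Nat.cast_nonneg n
    nlinarith [mul_le_mul_of_nonneg_left h2 hn0]
  · rw [tendsto_order]
    constructor
    · intro b hb
      exact absurd hb (by simp)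
    · intro b hb
      induction b using EReal.rec with
      | bot => exact absurd hb (lt_irrefl _)
      | top => exact Eventually.of_forall fun x => EReal.coe_lt_top _
      | coe r =>
          rw [eventually_comap, eventually_atTop]
          refine ⟨a - r + 1, fun s hs x hx => ?_⟩
          rw [EReal.coe_lt_coe_iff]
          have hpos : (0:ℝ) ≤ n * |l x - c| := by positivity
          have : ‖x‖ = s := hx
          nlinarith

lemma part1 (d : ℕ) (P : Measure (Rd d)) [IsProbabilityMeasure P]
    (hP : ∫⁻ x, (‖x‖₊ : ℝ≥0∞) ∂P = ⊤) : Lstar P = ⊥ := by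
  rw [Lstar, iSup_eq_bot]
  intro φ
  rw [iSup_eq_bot]
  intro hφ
  obtain ⟨b, A, hb, hbd⟩ := phi_neg_bound hφ
  have hTop : ∫⁻ x, ENNReal.ofReal (b * ‖x‖ - A) ∂P = ⊤ := by
    by_contra hne
    have hkey : ∀ x : Rd d,
        ENNReal.ofReal (b * ‖x‖) ≤ ENNReal.ofReal (b * ‖x‖ - A) + ENNReal.ofReal A := by
      intro x
      calc ENNReal.ofReal (b * ‖x‖) = ENNReal.ofReal ((b * ‖x‖ - A) + A) := by ring_nf
        _ ≤ ENNReal.ofReal (b * ‖x‖ - A) + ENNReal.ofReal A := ENNReal.ofReal_add_le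
    have h2 : ∫⁻ x, ENNReal.ofReal (b * ‖x‖) ∂P ≤
        (∫⁻ x, ENNReal.ofReal (b * ‖x‖ - A) ∂P) + ENNReal.ofReal A := by
      calc ∫⁻ x, ENNReal.ofReal (b * ‖x‖) ∂P
          ≤ ∫⁻ x, (ENNReal.ofReal (b * ‖x‖ - A) + ENNReal.ofReal A) ∂P :=
            lintegral_mono hkey
        _ = (∫⁻ x, ENNReal.ofReal (b * ‖x‖ - A) ∂P) + ENNReal.ofReal A * P univ := by
            rw [lintegral_add_right _ measurable_const, lintegral_const]
        _ = _ := by rw [measure_univ, mul_one]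
    have h3 : ∫⁻ x, ENNReal.ofReal (b * ‖x‖) ∂P = ⊤ := by
      have heq : ∀ x : Rd d, ENNReal.ofReal (b * ‖x‖) = ENNReal.ofReal b * (‖x‖₊ : ℝ≥0∞) := by
        intro x
        rw [ENNReal.ofReal_mul hb.le, (show ENNReal.ofReal ‖x‖ = (‖x‖₊ : ℝ≥0∞) from ofReal_norm x)]
      rw [lintegral_congr heq, lintegral_const_mul' _ _ ENNReal.ofReal_ne_top, hP,
        ENNReal.mul_top (by simpa [ENNReal.ofReal_eq_zero, not_le] using hb)]
    rw [h3, top_le_iff] at h2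
    rcases ENNReal.add_eq_top.1 h2 with h | h
    · exact hne h
    · exact ENNReal.ofReal_ne_top h
  have hneg : ∫⁻ x, epos (-(φ x)) ∂P = ⊤ := top_le_iff.1 (hTop ▸ lintegral_mono hbd)
  show Lfun φ P = ⊥
  rw [Lfun, erealIntegral, hneg, EReal.coe_ennreal_top, EReal.sub_top, EReal.bot_sub]

lemma part2 (d : ℕ) (P : Measure (Rd d)) [IsProbabilityMeasure P]
    (hfin : (∫⁻ x, (‖x‖₊ : ℝ≥0∞) ∂P) < ⊤)
    (l : Rd d →ₗ[ℝ] ℝ) (c : ℝ) (hl : l ≠ 0) (hP1 : P {x | l x = c} = 1) :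
    Lstar P = ⊤ := by
  have hlc : Continuous l := l.continuous_of_finiteDimensional
  have hs : MeasurableSet {x : Rd d | l x = c} :=
    (isClosed_eq hlc continuous_const).measurableSet
  have hae : ∀ᵐ x ∂P, l x = c := by
    rw [ae_iff]
    have h1 : P {x : Rd d | l x = c}ᶜ = P univ - P {x : Rd d | l x = c} :=
      measure_compl hs (measure_ne_top P _)
    simp only [measure_univ, hP1, tsub_self] at h1
    exact h1
  set N : ℝ≥0∞ := ∫⁻ x, (‖x‖₊ : ℝ≥0∞) ∂P with hN_def
  set ν : ℝ := N.toReal with hν_def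
  have hν0 : 0 ≤ ν := ENNReal.toReal_nonneg
  have hNν : N = ENNReal.ofReal ν := (ENNReal.ofReal_toReal hfin.ne).symm
  apply ereal_eq_top_of_forall_le
  intro K
  set a : ℝ := max K 0 + 2 * ν + 1 with ha_def
  have ha0 : 0 ≤ a := by positivity
  have haK : K ≤ a - 2 * ν - 1 := by
    simp only [ha_def]
    have := le_max_left K 0
    linarith
  -- pick n
  obtain ⟨n, hn⟩ : ∃ n : ℕ, (∫⁻ x : Rd d, ENNReal.ofReal (Real.exp (-‖x‖ - n * |l x - c|)))
      < ENNReal.ofReal (Real.exp (-a)) :=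
    ((I_tendsto_zero d l c hl).eventually_lt_const
      (by simp [Real.exp_pos])).exists
  set g : Rd d → ℝ := fun x => a - ‖x‖ - n * |l x - c| with hg_def
  set φ : Rd d → EReal := fun x => ((g x : ℝ) : EReal) with hφ_def
  have hφmem : MemPhi φ := memPhi_test d l c a n
  have hg_ae : ∀ᵐ x ∂P, g x = a - ‖x‖ := hae.mono fun x hx => by simp [hg_def, hx]
  -- neg part
  have hneg : ∫⁻ x, epos (-(φ x)) ∂P ≤ N := by
    rw [hN_def]
    refine lintegral_mono_ae (hg_ae.mono fun x hx => ?_)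
    have h1 : -(φ x) = ((-(g x) : ℝ) : EReal) := by rw [hφ_def]; exact (EReal.coe_neg _).symm
    rw [h1, epos_coe, ← (show ENNReal.ofReal ‖x‖ = (‖x‖₊ : ℝ≥0∞) from ofReal_norm x)]
    refine ENNReal.ofReal_le_ofReal ?_
    rw [hx]
    linarith
  -- pos part
  have hposm : Measurable (fun x : Rd d => ENNReal.ofReal ‖x‖) :=
    ENNReal.measurable_ofReal.comp continuous_norm.measurable
  have hpos : ENNReal.ofReal a - N ≤ ∫⁻ x, epos (φ x) ∂P := by
    have h1 : ∀ᵐ x ∂P, ENNReal.ofReal a - ENNReal.ofReal ‖x‖ ≤ epos (φ x) := by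
      refine hg_ae.mono fun x hx => ?_
      rw [hφ_def]
      rw [epos_coe, hx, ENNReal.ofReal_sub a (norm_nonneg x)]
    refine le_trans ?_ (lintegral_mono_ae h1)
    rw [tsub_le_iff_right]
    have h2 : ∀ x : Rd d, ENNReal.ofReal a
        ≤ (ENNReal.ofReal a - ENNReal.ofReal ‖x‖) + ENNReal.ofReal ‖x‖ := fun x => le_tsub_add
    calc ENNReal.ofReal a = ∫⁻ _x, ENNReal.ofReal a ∂P := by
          rw [lintegral_const, measure_univ, mul_one]
      _ ≤ ∫⁻ x, ((ENNReal.ofReal a - ENNReal.ofReal ‖x‖) + ENNReal.ofReal ‖x‖) ∂P :=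
          lintegral_mono h2
      _ = (∫⁻ x, (ENNReal.ofReal a - ENNReal.ofReal ‖x‖) ∂P) + ∫⁻ x, ENNReal.ofReal ‖x‖ ∂P :=
          lintegral_add_right _ hposm
      _ = (∫⁻ x, (ENNReal.ofReal a - ENNReal.ofReal ‖x‖) ∂P) + N := by
          congr 1
          rw [hN_def]
          exact lintegral_congr fun x => (show ENNReal.ofReal ‖x‖ = (‖x‖₊ : ℝ≥0∞) from ofReal_norm x)
  -- exp part
  have hE : (∫⁻ x, expE (φ x)) ≤ 1 := by
    have h1 : ∀ x : Rd d, expE (φ x)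
        = ENNReal.ofReal (Real.exp a) * ENNReal.ofReal (Real.exp (-‖x‖ - n * |l x - c|)) := by
      intro x
      rw [hφ_def]
      rw [expE_coe, ← ENNReal.ofReal_mul (Real.exp_pos a).le, ← Real.exp_add]
      congr 2
      simp only [hg_def]
      ring
    rw [lintegral_congr h1, lintegral_const_mul' _ _ ENNReal.ofReal_ne_top]
    calc ENNReal.ofReal (Real.exp a) * ∫⁻ x : Rd d, ENNReal.ofReal (Real.exp (-‖x‖ - n * |l x - c|))
        ≤ ENNReal.ofReal (Real.exp a) * ENNReal.ofReal (Real.exp (-a)) :=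
          mul_le_mul_right hn.le _
      _ = ENNReal.ofReal (Real.exp a * Real.exp (-a)) :=
          (ENNReal.ofReal_mul (Real.exp_pos a).le).symm
      _ = 1 := by rw [← Real.exp_add, add_neg_cancel, Real.exp_zero, ENNReal.ofReal_one]
  -- combine
  have hL : ((a - 2 * ν - 1 : ℝ) : EReal) ≤ Lfun φ P := by
    rw [Lfun, erealIntegral]
    have hstep1 : ((a - ν : ℝ) : EReal) ≤ ((∫⁻ x, epos (φ x) ∂P : ℝ≥0∞) : EReal) := by
      refine le_trans ?_ (EReal.coe_ennreal_le_coe_ennreal_iff.2 hpos)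
      rw [hNν, ← ENNReal.ofReal_sub a hν0, EReal.coe_ennreal_ofReal]
      exact EReal.coe_le_coe_iff.2 (le_max_left _ _)
    have hstep2 : ((∫⁻ x, epos (-(φ x)) ∂P : ℝ≥0∞) : EReal) ≤ ((ν : ℝ) : EReal) := by
      refine le_trans (EReal.coe_ennreal_le_coe_ennreal_iff.2 hneg) ?_
      rw [hNν, EReal.coe_ennreal_ofReal]
      exact EReal.coe_le_coe_iff.2 (max_le le_rfl hν0)
    have hstep3 : ((∫⁻ x, expE (φ x) : ℝ≥0∞) : EReal) ≤ ((1 : ℝ) : EReal) := by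
      refine le_trans (EReal.coe_ennreal_le_coe_ennreal_iff.2 hE) ?_
      simp
    calc ((a - 2 * ν - 1 : ℝ) : EReal)
        = (((a - ν : ℝ) : EReal) - ((ν : ℝ) : EReal)) - ((1 : ℝ) : EReal) := by
          rw [← EReal.coe_sub, ← EReal.coe_sub, EReal.coe_eq_coe_iff]
          ring
      _ ≤ _ := EReal.sub_le_sub (EReal.sub_le_sub hstep1 hstep2) hstep3
  calc ((K : ℝ) : EReal) ≤ ((a - 2 * ν - 1 : ℝ) : EReal) := EReal.coe_le_coe_iff.2 haK
    _ ≤ Lfun φ P := hL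
    _ ≤ Lstar P := le_iSup₂_of_le φ hφmem le_rfl

/-- Degenerate cases for the maximisation of `L(φ, P)` over `Φ`: (i) infinite first
moment gives `L* = -∞`; (ii) finite first moment but concentration on a hyperplane gives
`L* = ∞`. -/
theorem statement5 (d : ℕ) (P : Measure (Rd d)) [IsProbabilityMeasure P] :
    ((∫⁻ x, (‖x‖₊ : ℝ≥0∞) ∂P) = ⊤ → Lstar P = ⊥) ∧
    ((∫⁻ x, (‖x‖₊ : ℝ≥0∞) ∂P) < ⊤ →
      ∀ (l : Rd d →ₗ[ℝ] ℝ) (c : ℝ), l ≠ 0 → P {x | l x = c} = 1 → Lstar P = ⊤) := by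
  
  constructor
  · exact fun h => part1 d P h
  · intro hfin l c hl hP1
    exact part2 d P hfin l c hl hP1
end
end

section
/- Let P be a probability measure on ℝ^d with ∫ ‖x‖ dP(x) < ∞ and P(H) < 1 for every hyperplane H, let X ~ P, let A ∈ ℝ^{d×d} be invertible, let b ∈ ℝ^d, and let P_{A,b} denote the law of AX + b. Then the log-concave projections satisfy ψ*(P_{A,b})(x) = |det A|^{-1} ψ*(P)(A^{-1}(x − b)) for all x ∈ ℝ^d. -/
open MeasureTheory Filter Set
open scoped ENNReal Topology

noncomputable section

section AuxLC

variable {d : ℕ}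

lemma mulVE_eq (A : Matrix (Fin d) (Fin d) ℝ) (x : Rd d) : mulVE A x = Matrix.toEuclideanLin A x := rfl

lemma det_toEuclideanLin (A : Matrix (Fin d) (Fin d) ℝ) :
    LinearMap.det (Matrix.toEuclideanLin A) = A.det := by
  have h : Matrix.toEuclideanLin A =
      (((WithLp.linearEquiv 2 ℝ (Fin d → ℝ)).symm : (Fin d → ℝ) ≃ₗ[ℝ] Rd d) : (Fin d → ℝ) →ₗ[ℝ] Rd d) ∘ₗ
        (Matrix.toLin' A) ∘ₗ
        ((((WithLp.linearEquiv 2 ℝ (Fin d → ℝ)).symm).symm : Rd d ≃ₗ[ℝ] (Fin d → ℝ)) : Rd d →ₗ[ℝ] (Fin d → ℝ)) := rfl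
  rw [h, LinearMap.det_conj, LinearMap.det_toLin']

lemma continuous_mulVE (A : Matrix (Fin d) (Fin d) ℝ) : Continuous (mulVE A) := by
  have := (Matrix.toEuclideanLin A).continuous_of_finiteDimensional
  simpa [funext (mulVE_eq A)] using this

lemma continuous_T (A : Matrix (Fin d) (Fin d) ℝ) (b : Rd d) :
    Continuous (fun x : Rd d => mulVE A x + b) := (continuous_mulVE A).add continuous_const

lemma map_T_volume (A : Matrix (Fin d) (Fin d) ℝ) (hA : A.det ≠ 0) (b : Rd d) :
    Measure.map (fun x : Rd d => mulVE A x + b) volume = ENNReal.ofReal |(A.det)⁻¹| • volume := by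
  have h1 : (fun x : Rd d => mulVE A x + b) = (fun y : Rd d => y + b) ∘ (Matrix.toEuclideanLin A) := by
    funext x; simp [mulVE_eq, Function.comp]
  rw [h1, ← Measure.map_map (measurable_add_const b)
    (Matrix.toEuclideanLin A).continuous_of_finiteDimensional.measurable]
  rw [Measure.map_linearMap_addHaar_eq_smul_addHaar _ (by rw [det_toEuclideanLin]; exact hA),
    det_toEuclideanLin, Measure.map_smul, map_add_right_eq_self]

lemma lintegral_comp_T (A : Matrix (Fin d) (Fin d) ℝ) (hA : A.det ≠ 0) (b : Rd d)
    {φ : Rd d → ENNReal} (hφ : Measurable φ) :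
    ∫⁻ x, φ (mulVE A x + b) = ENNReal.ofReal |(A.det)⁻¹| * ∫⁻ y, φ y := by
  rw [← lintegral_map hφ ((continuous_T A b).measurable), map_T_volume A hA b,
    lintegral_smul_measure, smul_eq_mul]

lemma usc_comp_cont {α β : Type*} [TopologicalSpace α] [TopologicalSpace β]
    {f : β → ℝ} (hf : UpperSemicontinuous f) {T : α → β} (hT : Continuous T) :
    UpperSemicontinuous (fun x => f (T x)) :=
  fun x y hy => (hT.tendsto x).eventually (hf (T x) y hy)

lemma usc_const_mul {α : Type*} [TopologicalSpace α] {f : α → ℝ} (hf : UpperSemicontinuous f)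
    {c : ℝ} (hc : 0 ≤ c) : UpperSemicontinuous (fun x => c * f x) :=
  Continuous.comp_upperSemicontinuous (continuous_const.mul continuous_id) hf
    (fun a b hab => by simpa using mul_le_mul_of_nonneg_left hab hc)

lemma T_affine (A : Matrix (Fin d) (Fin d) ℝ) (b : Rd d) (x y : Rd d) (t : ℝ) :
    (1-t) • (mulVE A x + b) + t • (mulVE A y + b) = mulVE A ((1-t) • x + t • y) + b := by
  simp only [mulVE_eq, map_add, _root_.map_smul]
  module

lemma lcdensity_affine {f : Rd d → ℝ} (hf : IsLCDensity f) (A : Matrix (Fin d) (Fin d) ℝ)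
    (hA : A.det ≠ 0) (b : Rd d) :
    IsLCDensity (fun x => |A.det| * f (mulVE A x + b)) := by
  have habs : (0:ℝ) < |A.det| := abs_pos.2 hA
  obtain ⟨⟨hnn, hmeas, hint⟩, husc, hlcnn, hlc⟩ := hf
  have hTm : Measurable (fun x : Rd d => mulVE A x + b) := (continuous_T A b).measurable
  refine ⟨⟨fun x => mul_nonneg habs.le (hnn _), measurable_const.mul (hmeas.comp hTm), ?_⟩,
    usc_const_mul (usc_comp_cont husc (continuous_T A b)) habs.le, fun x => mul_nonneg habs.le (hnn _), ?_⟩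
  · have h1 : ∀ x : Rd d, ENNReal.ofReal (|A.det| * f (mulVE A x + b))
        = ENNReal.ofReal |A.det| * ENNReal.ofReal (f (mulVE A x + b)) :=
      fun x => ENNReal.ofReal_mul habs.le
    simp_rw [h1]
    have hm : Measurable fun x : Rd d => ENNReal.ofReal (f (mulVE A x + b)) :=
      ENNReal.measurable_ofReal.comp (hmeas.comp hTm)
    rw [lintegral_const_mul _ hm,
      lintegral_comp_T A hA b (φ := fun y => ENNReal.ofReal (f y))
        (ENNReal.measurable_ofReal.comp hmeas), hint, mul_one,
      ← ENNReal.ofReal_mul habs.le, abs_inv, mul_inv_cancel₀ habs.ne', ENNReal.ofReal_one]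
  · intro x y t ht
    have hTaff := T_affine A b x y t
    calc (|A.det| * f (mulVE A x + b)) ^ (1-t) * (|A.det| * f (mulVE A y + b)) ^ t
        = (|A.det| ^ (1-t) * |A.det| ^ t) * (f (mulVE A x + b) ^ (1-t) * f (mulVE A y + b) ^ t) := by
          rw [Real.mul_rpow habs.le (hnn _), Real.mul_rpow habs.le (hnn _)]; ring
      _ = |A.det| * (f (mulVE A x + b) ^ (1-t) * f (mulVE A y + b) ^ t) := by
          rw [← Real.rpow_add habs]; norm_num
      _ ≤ |A.det| * f ((1-t) • (mulVE A x + b) + t • (mulVE A y + b)) :=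
          mul_le_mul_of_nonneg_left (hlc _ _ t ht) habs.le
      _ = |A.det| * f (mulVE A ((1-t) • x + t • y) + b) := by rw [hTaff]

lemma mulVE_mulVE (A B : Matrix (Fin d) (Fin d) ℝ) (x : Rd d) :
    mulVE A (mulVE B x) = mulVE (A * B) x := by
  simp [mulVE, Matrix.mulVec_mulVec]

lemma mulVE_one (x : Rd d) : mulVE (1 : Matrix (Fin d) (Fin d) ℝ) x = x := by
  simp [mulVE]

lemma Tinv_T {A : Matrix (Fin d) (Fin d) ℝ} (hA : A.det ≠ 0) (b : Rd d) (x : Rd d) :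
    mulVE A⁻¹ (mulVE A x + b - b) = x := by
  rw [add_sub_cancel_right, mulVE_mulVE, Matrix.nonsing_inv_mul A (Ne.isUnit hA), mulVE_one]

lemma det_inv_abs {A : Matrix (Fin d) (Fin d) ℝ} (hA : A.det ≠ 0) :
    |A⁻¹.det| = |A.det|⁻¹ := by
  rw [A.det_nonsing_inv, Ring.inverse_eq_inv', abs_inv]

lemma g_eq_affine (A : Matrix (Fin d) (Fin d) ℝ) (hA : A.det ≠ 0) (b : Rd d) (fP : Rd d → ℝ) :
    (fun y : Rd d => |A.det|⁻¹ * fP (mulVE A⁻¹ (y - b)))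
      = fun y => |A⁻¹.det| * fP (mulVE A⁻¹ y + -(mulVE A⁻¹ b)) := by
  funext y
  rw [det_inv_abs hA]
  congr 1
  simp [mulVE_eq, map_sub, sub_eq_add_neg]

theorem isLCProj_map (P : Measure (Rd d)) [IsProbabilityMeasure P]
    (A : Matrix (Fin d) (Fin d) ℝ) (hA : A.det ≠ 0) (b : Rd d)
    (fP : Rd d → ℝ) (hfP : IsLCProj P fP) :
    IsLCProj (Measure.map (fun x => mulVE A x + b) P)
      (fun y => |A.det|⁻¹ * fP (mulVE A⁻¹ (y - b))) := by
  have hdet' : A⁻¹.det ≠ 0 := by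
    rw [A.det_nonsing_inv, Ring.inverse_eq_inv']; exact inv_ne_zero hA
  have habs : (0:ℝ) < |A.det| := abs_pos.2 hA
  set T : Rd d → Rd d := fun x => mulVE A x + b with hT
  have hTm : Measurable T := (continuous_T A b).measurable
  set g : Rd d → ℝ := fun y => |A.det|⁻¹ * fP (mulVE A⁻¹ (y - b)) with hgdef
  have hg : IsLCDensity g := by
    rw [hgdef, g_eq_affine A hA b fP]
    exact lcdensity_affine hfP.1 A⁻¹ hdet' _
  have hgm : Measurable g := hg.1.2.1
  have hgT : ∀ x, g (T x) = |A.det|⁻¹ * fP x := by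
    intro x; simp only [hgdef, hT]; rw [Tinv_T hA]
  -- a.e. positivity
  have hpos : ∀ᵐ y ∂(Measure.map T P), 0 < g y := by
    rw [ae_map_iff hTm.aemeasurable (measurableSet_lt measurable_const hgm)]
    filter_upwards [hfP.2.1] with x hx
    rw [hgT x]
    exact mul_pos (inv_pos.2 habs) hx
  -- integrability and integral identity
  have hlogg_eq : ∀ᵐ x ∂P, Real.log (g (T x)) = Real.log |A.det|⁻¹ + Real.log (fP x) := by
    filter_upwards [hfP.2.1] with x hx
    rw [hgT x, Real.log_mul (inv_ne_zero habs.ne') hx.ne']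
  have hint : Integrable (fun x => Real.log (g (T x))) P := by
    refine Integrable.congr ?_ (hlogg_eq.mono fun _ h => h.symm)
    exact (integrable_const _).add hfP.2.2.1
  have hasm : AEStronglyMeasurable (fun y => Real.log (g y)) (Measure.map T P) :=
    (Real.measurable_log.comp hgm).aestronglyMeasurable
  have hintQ : Integrable (fun y => Real.log (g y)) (Measure.map T P) := by
    exact (integrable_map_measure hasm hTm.aemeasurable).2 hint
  have hIQ : ∫ y, Real.log (g y) ∂(Measure.map T P) = ∫ x, Real.log (g (T x)) ∂P :=
    integral_map hTm.aemeasurable hasm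
  have hIQ2 : ∫ y, Real.log (g y) ∂(Measure.map T P)
      = Real.log |A.det|⁻¹ + ∫ x, Real.log (fP x) ∂P := by
    rw [hIQ, integral_congr_ae hlogg_eq, integral_add (integrable_const _) hfP.2.2.1,
      integral_const, probReal_univ]
    simp
  refine ⟨hg, hpos, hintQ, ?_⟩
  -- optimality
  intro k hk hkpos hkint
  have hkm : Measurable k := hk.1.2.1
  set kt : Rd d → ℝ := fun x => |A.det| * k (T x) with hktdef
  have hkt : IsLCDensity kt := lcdensity_affine hk A hA b
  have hkposP : ∀ᵐ x ∂P, 0 < k (T x) :=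
    (ae_map_iff hTm.aemeasurable (measurableSet_lt measurable_const hkm)).1 hkpos
  have hktpos : ∀ᵐ x ∂P, 0 < kt x := by
    filter_upwards [hkposP] with x hx; exact mul_pos habs hx
  have hkasm : AEStronglyMeasurable (fun y => Real.log (k y)) (Measure.map T P) :=
    (Real.measurable_log.comp hkm).aestronglyMeasurable
  have hkintP : Integrable (fun x => Real.log (k (T x))) P := by
    exact (integrable_map_measure hkasm hTm.aemeasurable).1 hkint
  have hlogkt_eq : ∀ᵐ x ∂P, Real.log (kt x) = Real.log |A.det| + Real.log (k (T x)) := by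
    filter_upwards [hkposP] with x hx
    rw [hktdef]
    exact Real.log_mul habs.ne' hx.ne'
  have hktint : Integrable (fun x => Real.log (kt x)) P :=
    Integrable.congr ((integrable_const _).add hkintP) (hlogkt_eq.mono fun _ h => h.symm)
  have hopt := hfP.2.2.2 kt hkt hktpos hktint
  have hIkt : ∫ x, Real.log (kt x) ∂P = Real.log |A.det| + ∫ x, Real.log (k (T x)) ∂P := by
    rw [integral_congr_ae hlogkt_eq, integral_add (integrable_const _) hkintP,
      integral_const, probReal_univ]
    simp
  have hIk : ∫ y, Real.log (k y) ∂(Measure.map T P) = ∫ x, Real.log (k (T x)) ∂P :=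
    integral_map hTm.aemeasurable hkasm
  rw [hIkt] at hopt
  rw [hIk, hIQ2, Real.log_inv]
  linarith

lemma lc_limit {f : Rd d → ℝ} (husc : UpperSemicontinuous f) (hlcf : IsLogConcaveFn f)
    (x x₀ : Rd d) (hx₀ : 0 < f x₀) :
    Tendsto (fun n : ℕ => f ((1 - (1/(n+1):ℝ)) • x + (1/(n+1):ℝ) • x₀)) atTop (𝓝 (f x)) := by
  obtain ⟨hnn, hlc⟩ := hlcf
  set t : ℕ → ℝ := fun n => 1/(n+1) with htdef
  have ht0 : Tendsto t atTop (𝓝 0) := tendsto_one_div_add_atTop_nhds_zero_nat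
  have htmem : ∀ n, t n ∈ Set.Icc (0:ℝ) 1 := by
    intro n
    constructor
    · positivity
    · rw [htdef]
      simp only [one_div]
      rw [inv_le_one_iff₀]
      right; exact le_add_of_nonneg_left (Nat.cast_nonneg n)
  set z : ℕ → Rd d := fun n => (1 - t n) • x + t n • x₀ with hzdef
  have hz : Tendsto z atTop (𝓝 x) := by
    have : Tendsto (fun n => (1 - t n) • x + t n • x₀) atTop (𝓝 ((1 - 0:ℝ) • x + (0:ℝ) • x₀)) :=
      (((tendsto_const_nhds.sub ht0).smul tendsto_const_nhds).add (ht0.smul tendsto_const_nhds))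
    simpa using this
  have hlow : ∀ n, f x ^ (1 - t n) * f x₀ ^ (t n) ≤ f (z n) := fun n => hlc x x₀ (t n) (htmem n)
  rw [Metric.tendsto_atTop]
  intro ε hε
  -- upper bound from usc
  have hupper : ∀ᶠ n in atTop, f (z n) < f x + ε :=
    hz.eventually (husc x (f x + ε) (by linarith))
  -- lower bound
  have hlower : ∀ᶠ n in atTop, f x - ε < f (z n) := by
    rcases eq_or_lt_of_le (hnn x) with h0 | hfx
    · exact Eventually.of_forall fun n => by have := hnn (z n); linarith
    · have hexp : Tendsto (fun n => Real.exp ((1 - t n) * Real.log (f x) + t n * Real.log (f x₀)))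
          atTop (𝓝 (f x)) := by
        have harg : Tendsto (fun n => (1 - t n) * Real.log (f x) + t n * Real.log (f x₀))
            atTop (𝓝 (Real.log (f x))) := by
          have h1 : Tendsto (fun n => (1 - t n) * Real.log (f x)) atTop
              (𝓝 ((1 - (0:ℝ)) * Real.log (f x))) :=
            (tendsto_const_nhds.sub ht0).mul tendsto_const_nhds
          have h2 : Tendsto (fun n => t n * Real.log (f x₀)) atTop
              (𝓝 ((0:ℝ) * Real.log (f x₀))) := ht0.mul tendsto_const_nhds
          have := h1.add h2
          simpa using this
        have := (Real.continuous_exp.tendsto _).comp harg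
        rwa [Real.exp_log hfx] at this
      have heq : ∀ n, f x ^ (1 - t n) * f x₀ ^ (t n)
          = Real.exp ((1 - t n) * Real.log (f x) + t n * Real.log (f x₀)) := by
        intro n
        rw [Real.exp_add, Real.rpow_def_of_pos hfx, Real.rpow_def_of_pos hx₀,
          mul_comm (Real.log (f x)), mul_comm (Real.log (f x₀))]
      have hev : ∀ᶠ n in atTop, f x - ε < f x ^ (1 - t n) * f x₀ ^ (t n) := by
        have := hexp.eventually (eventually_gt_nhds (show f x - ε < f x by linarith))
        filter_upwards [this] with n hn
        rw [heq n]; exact hn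
      filter_upwards [hev] with n hn
      exact lt_of_lt_of_le hn (hlow n)
  rw [← eventually_atTop]
  filter_upwards [hupper, hlower] with n h1 h2
  rw [Real.dist_eq, abs_sub_lt_iff]
  constructor <;> linarith

lemma eq_of_ae_eq {f g : Rd d → ℝ} (hf : IsLCDensity f) (hg : IsLCDensity g)
    (hae : f =ᵐ[(volume : Measure (Rd d))] g) : f = g := by
  obtain ⟨⟨hfnn, hfm, hfint⟩, hfusc, hflc⟩ := hf
  obtain ⟨⟨hgnn, hgm, hgint⟩, hgusc, hglc⟩ := hg
  funext x
  set S : Set (Rd d) := {y | f y = g y} with hSdef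
  have hSc : volume Sᶜ = 0 := hae
  -- positivity set of f has positive volume
  have hposf : 0 < volume {y : Rd d | 0 < f y} := by
    by_contra hcon
    push_neg at hcon
    have hzero : volume {y : Rd d | 0 < f y} = 0 := le_antisymm (by simpa using hcon) zero_le
    have : (fun y : Rd d => ENNReal.ofReal (f y)) =ᵐ[volume] 0 := by
      refine measure_mono_null ?_ hzero
      intro y hy
      simp only [mem_setOf_eq, Pi.zero_apply] at hy ⊢
      rcases eq_or_lt_of_le (hfnn y) with h | h
      · exact absurd (by simp [← h]) hy
      · exact h
    have := lintegral_congr_ae this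
    rw [hfint] at this
    simp at this
  set t : ℕ → ℝ := fun n => 1/(n+1) with htdef
  have htne : ∀ n, t n ≠ 0 := fun n => by positivity
  set B : ℕ → Set (Rd d) := fun n => (fun x₀ => (1 - t n) • x + t n • x₀) ⁻¹' Sᶜ with hBdef
  have hBnull : ∀ n, volume (B n) = 0 := by
    intro n
    have hBeq : B n = (fun z : Rd d => t n • z) ⁻¹' ((fun z : Rd d => z + (1 - t n) • x) ⁻¹' Sᶜ) := by
      ext y
      simp only [hBdef, mem_preimage, mem_compl_iff]
      rw [add_comm]
    rw [hBeq, Measure.addHaar_preimage_smul volume (htne n)]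
    rw [show ((fun z : Rd d => z + (1 - t n) • x) ⁻¹' Sᶜ) = (· + (1 - t n) • x) ⁻¹' Sᶜ from rfl,
      measure_preimage_add_right volume _ _, hSc, mul_zero]
  have hNnull : volume (Sᶜ ∪ ⋃ n, B n) = 0 :=
    measure_union_null hSc (measure_iUnion_null_iff.2 hBnull)
  -- pick x₀
  have hpos2 : 0 < volume ({y : Rd d | 0 < f y} \ (Sᶜ ∪ ⋃ n, B n)) := by
    rw [measure_diff_null hNnull]
    exact hposf
  obtain ⟨x₀, hx₀⟩ := nonempty_of_measure_ne_zero hpos2.ne'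
  obtain ⟨hfx₀, hx₀n⟩ := hx₀
  have hx₀S : x₀ ∈ S := by
    by_contra h
    exact hx₀n (mem_union_left _ h)
  have hx₀B : ∀ n, x₀ ∉ B n := by
    intro n hn
    exact hx₀n (mem_union_right _ (mem_iUnion.2 ⟨n, hn⟩))
  have hgx₀ : 0 < g x₀ := by
    have h0 : 0 < f x₀ := hfx₀
    have h1 : f x₀ = g x₀ := hx₀S
    rwa [h1] at h0
  have hzS : ∀ n, f ((1 - t n) • x + t n • x₀) = g ((1 - t n) • x + t n • x₀) := by
    intro n
    have := hx₀B n
    simp only [hBdef, mem_preimage, mem_compl_iff, not_not] at this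
    exact this
  have hft := lc_limit hfusc ⟨hfnn, hflc.2⟩ x x₀ hfx₀
  have hgt := lc_limit hgusc ⟨hgnn, hglc.2⟩ x x₀ hgx₀
  have : Tendsto (fun n : ℕ => f ((1 - (1/(n+1):ℝ)) • x + (1/(n+1):ℝ) • x₀)) atTop (𝓝 (g x)) := by
    refine hgt.congr ?_
    intro n
    exact (hzS n).symm
  exact tendsto_nhds_unique hft this

lemma sqrt_amgm {a b : ℝ} (ha : 0 ≤ a) (hb : 0 ≤ b) : Real.sqrt (a*b) ≤ (a+b)/2 := by
  rw [show a * b = ((a+b)/2)^2 - ((a-b)/2)^2 by ring]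
  calc Real.sqrt (((a+b)/2)^2 - ((a-b)/2)^2) ≤ Real.sqrt (((a+b)/2)^2) :=
        Real.sqrt_le_sqrt (by nlinarith)
    _ = (a+b)/2 := Real.sqrt_sq (by positivity)

lemma usc_mul {α : Type*} [TopologicalSpace α] {f g : α → ℝ}
    (hf : UpperSemicontinuous f) (hg : UpperSemicontinuous g)
    (hfn : ∀ x, 0 ≤ f x) (hgn : ∀ x, 0 ≤ g x) : UpperSemicontinuous (fun x => f x * g x) := by
  intro x y hy
  simp only at hy
  set ε : ℝ := min 1 ((y - f x * g x)/(2*(f x + g x + 1))) with hε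
  have hfgx : 0 ≤ f x * g x := mul_nonneg (hfn x) (hgn x)
  have hd : 0 < y - f x * g x := by linarith
  have hden : 0 < 2*(f x + g x + 1) := by have := hfn x; have := hgn x; linarith
  have hεpos : 0 < ε := lt_min one_pos (by positivity)
  have hkey : (f x + ε) * (g x + ε) < y := by
    have hε1 : ε ≤ 1 := min_le_left _ _
    have hε2 : ε ≤ (y - f x * g x)/(2*(f x + g x + 1)) := min_le_right _ _
    have : ε * (2*(f x + g x + 1)) ≤ y - f x * g x := by
      rw [← le_div_iff₀ hden]; exact hε2
    nlinarith [hfn x, hgn x, hεpos]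
  filter_upwards [hf x (f x + ε) (by linarith), hg x (g x + ε) (by linarith)] with z h1 h2
  calc f z * g z < (f x + ε) * (g x + ε) := by
        apply mul_lt_mul'' h1 h2 (hfn z) (hgn z)
    _ < y := hkey

lemma convex_pos_set {E : Type*} [AddCommGroup E] [Module ℝ E] {f : E → ℝ}
    (hlc : IsLogConcaveFn f) : Convex ℝ {x | 0 < f x} := by
  intro x hx y hy a b ha hb hab
  simp only [mem_setOf_eq] at *
  have hb1 : b ∈ Set.Icc (0:ℝ) 1 := ⟨hb, by linarith⟩
  have := hlc.2 x y b hb1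
  have ha' : a = 1 - b := by linarith
  have hpos : 0 < f x ^ (1 - b) * f y ^ b :=
    mul_pos (Real.rpow_pos_of_pos hx _) (Real.rpow_pos_of_pos hy _)
  rw [ha']
  exact lt_of_lt_of_le hpos this

lemma sqrt_mul_lc {E : Type*} [AddCommGroup E] [Module ℝ E] {f g : E → ℝ}
    (hf : IsLogConcaveFn f) (hg : IsLogConcaveFn g) :
    IsLogConcaveFn (fun x => Real.sqrt (f x * g x)) := by
  obtain ⟨hfn, hfc⟩ := hf
  obtain ⟨hgn, hgc⟩ := hg
  refine ⟨fun x => Real.sqrt_nonneg _, ?_⟩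
  intro x y t ht
  set z := (1 - t) • x + t • y with hz
  have h1 := hfc x y t ht
  have h2 := hgc x y t ht
  have hfxg : 0 ≤ f x * g x := mul_nonneg (hfn x) (hgn x)
  have hfyg : 0 ≤ f y * g y := mul_nonneg (hfn y) (hgn y)
  have e1 : ∀ a : ℝ, 0 ≤ a → ∀ p : ℝ, Real.sqrt a ^ p = (a ^ p) ^ ((2:ℝ)⁻¹) := by
    intro a ha p
    rw [Real.sqrt_eq_rpow, ← Real.rpow_mul ha, ← Real.rpow_mul ha]
    congr 1; ring
  calc Real.sqrt (f x * g x) ^ (1 - t) * Real.sqrt (f y * g y) ^ t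
      = ((f x * g x) ^ (1-t)) ^ ((2:ℝ)⁻¹) * ((f y * g y) ^ t) ^ ((2:ℝ)⁻¹) := by
        rw [e1 _ hfxg, e1 _ hfyg]
    _ = ((f x ^ (1-t) * f y ^ t) * (g x ^ (1-t) * g y ^ t)) ^ ((2:ℝ)⁻¹) := by
        rw [← Real.mul_rpow (Real.rpow_nonneg hfxg _) (Real.rpow_nonneg hfyg _),
          Real.mul_rpow (hfn x) (hgn x), Real.mul_rpow (hfn y) (hgn y)]
        congr 1; ring
    _ ≤ (f z * g z) ^ ((2:ℝ)⁻¹) := by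
        apply Real.rpow_le_rpow
          (mul_nonneg (mul_nonneg (Real.rpow_nonneg (hfn x) _) (Real.rpow_nonneg (hfn y) _))
            (mul_nonneg (Real.rpow_nonneg (hgn x) _) (Real.rpow_nonneg (hgn y) _))) ?_ (by norm_num)
        exact mul_le_mul h1 h2
          (mul_nonneg (Real.rpow_nonneg (hgn x) _) (Real.rpow_nonneg (hgn y) _)) (hfn z)
    _ = Real.sqrt (f z * g z) := by rw [Real.sqrt_eq_rpow]; norm_num

lemma lc_const_mul {E : Type*} [AddCommGroup E] [Module ℝ E] {f : E → ℝ}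
    (hf : IsLogConcaveFn f) {k : ℝ} (hk : 0 < k) :
    IsLogConcaveFn (fun x => k * f x) := by
  obtain ⟨hfn, hfc⟩ := hf
  refine ⟨fun x => mul_nonneg hk.le (hfn x), ?_⟩
  intro x y t ht
  calc (k * f x) ^ (1 - t) * (k * f y) ^ t
      = (k ^ (1-t) * k ^ t) * (f x ^ (1-t) * f y ^ t) := by
        rw [Real.mul_rpow hk.le (hfn x), Real.mul_rpow hk.le (hfn y)]; ring
    _ = k * (f x ^ (1-t) * f y ^ t) := by rw [← Real.rpow_add hk]; norm_num
    _ ≤ k * f ((1-t) • x + t • y) := mul_le_mul_of_nonneg_left (hfc x y t ht) hk.le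

theorem lcproj_unique (Q : Measure (Rd d)) [IsProbabilityMeasure Q]
    (hhyp : ∀ (l : Rd d →ₗ[ℝ] ℝ) (c : ℝ), l ≠ 0 → Q {x | l x = c} < 1)
    {f g : Rd d → ℝ} (hf : IsLCProj Q f) (hg : IsLCProj Q g) : f = g := by
  obtain ⟨hfd, hfpos, hfint, hfopt⟩ := hf
  obtain ⟨hgd, hgpos, hgint, hgopt⟩ := hg
  obtain ⟨⟨hfnn, hfm, hfI⟩, hfusc, hflc⟩ := hfd
  obtain ⟨⟨hgnn, hgm, hgI⟩, hgusc, hglc⟩ := hgd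
  -- the two maxima agree
  have hMeq : ∫ x, Real.log (g x) ∂Q = ∫ x, Real.log (f x) ∂Q :=
    le_antisymm (hfopt g ⟨⟨hgnn, hgm, hgI⟩, hgusc, hglc⟩ hgpos hgint)
      (hgopt f ⟨⟨hfnn, hfm, hfI⟩, hfusc, hflc⟩ hfpos hfint)
  set s : Rd d → ℝ := fun x => Real.sqrt (f x * g x) with hsdef
  have hsm : Measurable s := Real.continuous_sqrt.measurable.comp (hfm.mul hgm)
  have hsnn : ∀ x, 0 ≤ s x := fun x => Real.sqrt_nonneg _
  set C : ℝ≥0∞ := ∫⁻ x, ENNReal.ofReal (s x) with hCdef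
  -- C ≤ 1 by AM-GM
  have hhalf : ∫⁻ x : Rd d, ENNReal.ofReal ((f x + g x)/2) = 1 := by
    have hpt : ∀ x : Rd d, ENNReal.ofReal ((f x + g x)/2)
        = (ENNReal.ofReal (f x) + ENNReal.ofReal (g x)) * 2⁻¹ := by
      intro x
      rw [ENNReal.ofReal_div_of_pos (by norm_num : (0:ℝ) < 2),
        ENNReal.ofReal_add (hfnn x) (hgnn x), ENNReal.ofReal_ofNat, div_eq_mul_inv]
    simp_rw [hpt]
    rw [lintegral_mul_const' _ _ (by norm_num),
      lintegral_add_left hfm.ennreal_ofReal, hfI, hgI]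
    norm_num
    rw [ENNReal.mul_inv_cancel (by norm_num) (by norm_num)]
  have hC1 : C ≤ 1 := by
    rw [hCdef, ← hhalf]
    exact lintegral_mono fun x => ENNReal.ofReal_le_ofReal (sqrt_amgm (hfnn x) (hgnn x))
  have hCfin : C ≠ ⊤ := (lt_of_le_of_lt hC1 ENNReal.one_lt_top).ne
  -- positivity set
  set K : Set (Rd d) := {x | 0 < f x} ∩ {x | 0 < g x} with hKdef
  have hKconv : Convex ℝ K := (convex_pos_set ⟨hfnn, hflc.2⟩).inter (convex_pos_set ⟨hgnn, hglc.2⟩)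
  have hKm : MeasurableSet K :=
    (measurableSet_lt measurable_const hfm).inter (measurableSet_lt measurable_const hgm)
  have hQKc : Q Kᶜ = 0 := by
    rw [hKdef, compl_inter]
    exact measure_union_null hfpos hgpos
  have hQK : Q K = 1 := by
    have := measure_add_measure_compl (μ := Q) hKm
    rw [hQKc, add_zero, measure_univ] at this
    exact this
  -- C > 0
  have hCpos : 0 < C := by
    rcases (eq_or_lt_of_le (by positivity : (0:ℝ≥0∞) ≤ C)).imp Eq.symm id with h0 | h
    · exfalso
      -- s = 0 a.e., so vol K = 0
      have hz0 : ∫⁻ x, ENNReal.ofReal (s x) = 0 := by rw [← hCdef]; exact h0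
      have hae0 : (fun x => ENNReal.ofReal (s x)) =ᵐ[volume] 0 :=
        (lintegral_eq_zero_iff hsm.ennreal_ofReal).1 hz0
      have hvolK : volume K = 0 := by
        refine measure_mono_null ?_ hae0
        intro x hx
        simp only [mem_setOf_eq, Pi.zero_apply]
        obtain ⟨h1, h2⟩ := hx
        have : 0 < s x := Real.sqrt_pos.2 (mul_pos h1 h2)
        simp [ENNReal.ofReal_eq_zero, not_le, this]
      -- K nonempty
      have hKne : K.Nonempty := nonempty_of_measure_ne_zero (by rw [hQK]; norm_num)
      -- interior empty
      have hint : interior K = ∅ := by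
        by_contra h
        obtain ⟨z, hz⟩ := nonempty_iff_ne_empty.2 h
        have h1 : 0 < volume (interior K) := isOpen_interior.measure_pos volume ⟨z, hz⟩
        have h2 : volume (interior K) ≤ volume K := measure_mono interior_subset
        rw [hvolK] at h2
        exact absurd (le_antisymm h2 zero_le) h1.ne'
      -- affine span not top
      have hspan : affineSpan ℝ K ≠ ⊤ := by
        intro htop
        rw [← hKconv.interior_nonempty_iff_affineSpan_eq_top] at htop
        rw [hint] at htop
        exact not_nonempty_empty htop
      have hvspan : vectorSpan ℝ K ≠ ⊤ := by
        intro htop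
        exact hspan ((AffineSubspace.affineSpan_eq_top_iff_vectorSpan_eq_top_of_nonempty ℝ _ _ hKne).2 htop)
      -- orthogonal vector
      have hbot : (vectorSpan ℝ K)ᗮ ≠ ⊥ := by
        intro hb
        exact hvspan (Submodule.orthogonal_eq_bot_iff.1 hb)
      obtain ⟨v, hvmem, hvne⟩ := Submodule.exists_mem_ne_zero_of_ne_bot hbot
      obtain ⟨p, hp⟩ := hKne
      set l : Rd d →ₗ[ℝ] ℝ :=
        { toFun := fun x => inner ℝ v x
          map_add' := fun a b => inner_add_right v a b
          map_smul' := fun c a => real_inner_smul_right v a c } with hldef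
      have hlne : l ≠ 0 := by
        intro h0
        have : inner ℝ v v = (0:ℝ) := by
          have := congrFun (congrArg DFunLike.coe h0) v
          simpa [hldef] using this
        exact hvne (inner_self_eq_zero.1 this)
      have hsub : K ⊆ {x | l x = l p} := by
        intro x hx
        simp only [mem_setOf_eq, hldef, LinearMap.coe_mk, AddHom.coe_mk]
        have hmem : x -ᵥ p ∈ vectorSpan ℝ K := vsub_mem_vectorSpan ℝ hx hp
        have : inner ℝ (x -ᵥ p) v = (0:ℝ) := hvmem _ hmem
        have h2 : inner ℝ v (x - p) = (0:ℝ) := by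
          rwa [real_inner_comm]
        rw [inner_sub_right] at h2
        linarith
      have := hhyp l (l p) hlne
      have hge : Q {x | l x = l p} = 1 := le_antisymm prob_le_one
        (by rw [← hQK]; exact measure_mono hsub)
      rw [hge] at this
      exact lt_irrefl _ this
    · exact h
  set c : ℝ := C.toReal with hcdef
  have hcpos : 0 < c := ENNReal.toReal_pos hCpos.ne' hCfin
  have hc1 : c ≤ 1 := by
    rw [hcdef]
    exact ENNReal.toReal_le_of_le_ofReal one_pos.le (by rwa [ENNReal.ofReal_one])
  have hCc : C = ENNReal.ofReal c := (ENNReal.ofReal_toReal hCfin).symm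
  -- candidate
  set h : Rd d → ℝ := fun x => s x / c with hhdef
  have hhm : Measurable h := hsm.div_const c
  have hhnn : ∀ x, 0 ≤ h x := fun x => div_nonneg (hsnn x) hcpos.le
  have hhI : ∫⁻ x, ENNReal.ofReal (h x) = 1 := by
    have hpt : ∀ x, ENNReal.ofReal (h x) = ENNReal.ofReal (s x) * ENNReal.ofReal c⁻¹ := by
      intro x
      rw [hhdef]
      simp only [div_eq_mul_inv]
      exact ENNReal.ofReal_mul (hsnn x)
    simp_rw [hpt]
    rw [lintegral_mul_const' _ _ ENNReal.ofReal_ne_top, ← hCdef, hCc, ← ENNReal.ofReal_mul hcpos.le,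
      mul_inv_cancel₀ hcpos.ne', ENNReal.ofReal_one]
  have hhusc : UpperSemicontinuous h := by
    have h1 : UpperSemicontinuous (fun x => f x * g x) := usc_mul hfusc hgusc hfnn hgnn
    have h2 : UpperSemicontinuous s :=
      Continuous.comp_upperSemicontinuous (g := fun r : ℝ => Real.sqrt r)
        Real.continuous_sqrt h1 (fun a b hab => Real.sqrt_le_sqrt hab)
    have h3 : h = fun x => c⁻¹ * s x := by funext x; rw [hhdef]; ring
    rw [h3]
    exact usc_const_mul h2 (by positivity)
  have hslc : IsLogConcaveFn s := sqrt_mul_lc ⟨hfnn, hflc.2⟩ ⟨hgnn, hglc.2⟩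
  have hhlc : IsLogConcaveFn h := by
    have h3 : h = fun x => c⁻¹ * s x := by funext x; rw [hhdef]; ring
    rw [h3]
    exact lc_const_mul hslc (by positivity)
  have hhd : IsLCDensity h := ⟨⟨hhnn, hhm, hhI⟩, hhusc, hhlc⟩
  have hhposQ : ∀ᵐ x ∂Q, 0 < h x := by
    filter_upwards [hfpos, hgpos] with x h1 h2
    exact div_pos (Real.sqrt_pos.2 (mul_pos h1 h2)) hcpos
  have hlogh : ∀ᵐ x ∂Q, Real.log (h x)
      = (Real.log (f x) + Real.log (g x))/2 - Real.log c := by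
    filter_upwards [hfpos, hgpos] with x h1 h2
    have hsx : 0 < s x := Real.sqrt_pos.2 (mul_pos h1 h2)
    rw [hhdef]
    simp only
    rw [Real.log_div hsx.ne' hcpos.ne', hsdef]
    simp only
    rw [Real.log_sqrt (mul_nonneg h1.le h2.le), Real.log_mul h1.ne' h2.ne']
  have hhint : Integrable (fun x => Real.log (h x)) Q := by
    refine Integrable.congr ?_ (hlogh.mono fun _ hh => hh.symm)
    exact ((hfint.add hgint).div_const 2).sub (integrable_const _)
  have hIh : ∫ x, Real.log (h x) ∂Q = ∫ x, Real.log (f x) ∂Q - Real.log c := by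
    have i1 : Integrable (fun x => (Real.log (f x) + Real.log (g x))/2) Q :=
      (hfint.add hgint).div_const 2
    rw [integral_congr_ae hlogh, integral_sub i1 (integrable_const _)]
    have i2 : ∫ x, (Real.log (f x) + Real.log (g x))/2 ∂Q
        = (∫ x, Real.log (f x) ∂Q + ∫ x, Real.log (g x) ∂Q)/2 := by
      rw [integral_div, integral_add hfint hgint]
    rw [i2, hMeq, integral_const, probReal_univ]
    simp
  have hlogc : 0 ≤ Real.log c := by
    have hle := hfopt h hhd hhposQ hhint
    rw [hIh] at hle
    linarith
  have hceq : c = 1 := by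
    rcases lt_or_ge c 1 with hlt | hge
    · exact absurd hlogc (not_le.2 (Real.log_neg hcpos hlt))
    · linarith
  have hCone : C = 1 := by rw [hCc, hceq, ENNReal.ofReal_one]
  -- equality in AM-GM a.e.
  set D : Rd d → ℝ := fun x => (f x + g x)/2 - s x with hDdef
  have hDnn : ∀ x, 0 ≤ D x := fun x => sub_nonneg.2 (sqrt_amgm (hfnn x) (hgnn x))
  have hDm : Measurable D := ((hfm.add hgm).div_const 2).sub hsm
  have hsplit : (∫⁻ x, ENNReal.ofReal (D x)) + C = 1 := by
    have hpt : ∀ x : Rd d, ENNReal.ofReal ((f x + g x)/2)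
        = ENNReal.ofReal (D x) + ENNReal.ofReal (s x) := by
      intro x
      rw [← ENNReal.ofReal_add (hDnn x) (hsnn x)]
      congr 1
      rw [hDdef]
      ring
    rw [hCdef, ← lintegral_add_left hDm.ennreal_ofReal, ← hhalf]
    exact lintegral_congr fun x => (hpt x).symm
  rw [hCone] at hsplit
  have hDzero : ∫⁻ x, ENNReal.ofReal (D x) = 0 := by
    by_contra hne
    have h2 : (1:ℝ≥0∞) < 1 + ∫⁻ x, ENNReal.ofReal (D x) :=
      ENNReal.lt_add_right (by norm_num) hne
    rw [add_comm, hsplit] at h2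
    exact lt_irrefl _ h2
  have hDae : ∀ᵐ x ∂(volume : Measure (Rd d)), ENNReal.ofReal (D x) = 0 :=
    (lintegral_eq_zero_iff hDm.ennreal_ofReal).1 hDzero
  have hae : f =ᵐ[(volume : Measure (Rd d))] g := by
    filter_upwards [hDae] with x hx
    have hD0 : D x = 0 := le_antisymm (by rwa [ENNReal.ofReal_eq_zero] at hx) (hDnn x)
    have hsx : s x = (f x + g x)/2 := by rw [hDdef] at hD0; linarith [hD0]
    have hsq : s x ^ 2 = f x * g x := by
      rw [hsdef]
      simp only
      rw [sq]
      exact Real.mul_self_sqrt (mul_nonneg (hfnn x) (hgnn x))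
    rw [hsx] at hsq
    nlinarith [hfnn x, hgnn x]
  exact eq_of_ae_eq ⟨⟨hfnn, hfm, hfI⟩, hfusc, hflc⟩ ⟨⟨hgnn, hgm, hgI⟩, hgusc, hglc⟩ hae

end AuxLC

/-- Affine equivariance of the log-concave projection. -/
theorem statement7 (d : ℕ) (P : Measure (Rd d)) (hP : MemP P)
    (A : Matrix (Fin d) (Fin d) ℝ) (hA : A.det ≠ 0) (b : Rd d)
    (fP fQ : Rd d → ℝ) (hfP : IsLCProj P fP)
    (hfQ : IsLCProj (Measure.map (fun x => mulVE A x + b) P) fQ) :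
    ∀ x : Rd d, fQ x = |A.det|⁻¹ * fP (mulVE A⁻¹ (x - b)) := by
  obtain ⟨hPprob, hPint, hPhyp⟩ := hP
  haveI : IsProbabilityMeasure P := hPprob
  have hTm : Measurable (fun x : Rd d => mulVE A x + b) := (continuous_T A b).measurable
  haveI hQprob : IsProbabilityMeasure (Measure.map (fun x : Rd d => mulVE A x + b) P) :=
    Measure.isProbabilityMeasure_map hTm.aemeasurable
  have hg := isLCProj_map P A hA b fP hfP
  have hhypQ : ∀ (l : Rd d →ₗ[ℝ] ℝ) (c : ℝ), l ≠ 0 →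
      (Measure.map (fun x : Rd d => mulVE A x + b) P) {x | l x = c} < 1 := by
    intro l c hl
    have hlcont : Continuous l := l.continuous_of_finiteDimensional
    have hms : MeasurableSet {x : Rd d | l x = c} :=
      (isClosed_eq hlcont continuous_const).measurableSet
    rw [Measure.map_apply hTm hms]
    have hpre : (fun x : Rd d => mulVE A x + b) ⁻¹' {x | l x = c}
        = {x : Rd d | (l.comp (Matrix.toEuclideanLin A)) x = c - l b} := by
      ext x
      simp only [Set.mem_preimage, Set.mem_setOf_eq, LinearMap.comp_apply, ← mulVE_eq]
      rw [map_add]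
      constructor
      · intro h; linarith
      · intro h; linarith
    rw [hpre]
    refine hPhyp _ _ ?_
    intro h0
    apply hl
    ext y
    have hy : mulVE A (mulVE A⁻¹ y) = y := by
      rw [mulVE_mulVE, Matrix.mul_nonsing_inv A (Ne.isUnit hA), mulVE_one]
    have := congrFun (congrArg DFunLike.coe h0) (mulVE A⁻¹ y)
    simp only [LinearMap.comp_apply, LinearMap.zero_apply, ← mulVE_eq] at this
    rw [hy] at this
    simpa using this
  have heq := lcproj_unique (Measure.map (fun x : Rd d => mulVE A x + b) P) hhypQ hfQ hg
  intro x
  rw [heq]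
end
end
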